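/- arXiv:1607.00458 — 3 statements merged into one kernel-verified Lean document; each statement's English description precedes it below -/
import Mathlib

section
/- Let μ > 0 and let {u_j} ⊂ X₀ be a bounded sequence weakly convergent in X₀ to some u_∞ ∈ X₀. Then, with Ê_μ(u) := (1/2)‖u‖² − (μ/2*)∫_Ω |u|^{2*} dx, one has liminf_{j→∞} (Ê_μ(u_j) − Ê_μ(u_∞)) ≥ liminf_{j→∞} [ (1/2 − (c_{2*}^{2*} μ / 2*) ‖u_j − u_∞‖^{2*−2}) ‖u_j − u_∞‖² ]. -/
open MeasureTheory Filter Topology Set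
open scoped ENNReal

noncomputable section

/-- Euclidean space `ℝⁿ`. -/
abbrev EV (n : ℕ) := EuclideanSpace ℝ (Fin n)

/-- The fractional critical Sobolev exponent `2* = 2n/(n-2s)`. -/
def twoStar (n : ℕ) (s : ℝ) : ℝ := 2 * n / (n - 2 * s)

/-- Gagliardo-type bilinear form `⟨u,v⟩ = ∬ (u(x)-u(y))(v(x)-v(y)) K(x-y) dx dy`. -/
def gInner {n : ℕ} (K : EV n → ℝ) (u v : EV n → ℝ) : ℝ :=
  ∫ p : EV n × EV n, (u p.1 - u p.2) * (v p.1 - v p.2) * K (p.1 - p.2)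

/-- Gagliardo norm `‖u‖ = ⟨u,u⟩^{1/2}`. -/
def gNorm {n : ℕ} (K : EV n → ℝ) (u : EV n → ℝ) : ℝ := Real.sqrt (gInner K u u)

/-- Membership in the space `X₀`: measurable, vanishing a.e. outside `Ω`,
with finite Gagliardo seminorm. -/
structure MemX0 {n : ℕ} (K : EV n → ℝ) (Ω : Set (EV n)) (u : EV n → ℝ) : Prop where
  meas : Measurable u
  zero : ∀ᵐ x ∂(volume : Measure (EV n)), x ∉ Ω → u x = 0
  fin : Integrable (fun p : EV n × EV n => (u p.1 - u p.2) ^ 2 * K (p.1 - p.2))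

/-- `L^p` norm (real exponent `p`) on `Ω`. -/
def lpNorm {n : ℕ} (Ω : Set (EV n)) (p : ℝ) (u : EV n → ℝ) : ℝ :=
  (∫ x in Ω, |u x| ^ p) ^ (1 / p)

/-- Weak convergence in `X₀`. -/
def WeakConv {n : ℕ} (K : EV n → ℝ) (Ω : Set (EV n)) (uj : ℕ → EV n → ℝ)
    (u : EV n → ℝ) : Prop :=
  ∀ v, MemX0 K Ω v → Tendsto (fun j => gInner K (uj j) v) atTop (𝓝 (gInner K u v))

/-- The singular kernel `|x|^{-(n+2s)}` of the fractional Laplacian. -/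
def fracKernel (n : ℕ) (s : ℝ) : EV n → ℝ := fun x => ‖x‖ ^ (-((n : ℝ) + 2 * s))

/-- The energy functional `E_{λ,μ}`. -/
def energy {n : ℕ} (s : ℝ) (K : EV n → ℝ) (Ω : Set (EV n)) (μ lam : ℝ)
    (g : ℝ → ℝ) (u : EV n → ℝ) : ℝ :=
  1 / 2 * gNorm K u ^ 2 - μ / twoStar n s * (∫ x in Ω, |u x| ^ twoStar n s)
    - lam * ∫ x in Ω, (∫ τ in (0:ℝ)..(u x), g τ)

/-- The functional `Ê_μ`. -/
def energyHat {n : ℕ} (s : ℝ) (K : EV n → ℝ) (Ω : Set (EV n)) (μ : ℝ)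
    (u : EV n → ℝ) : ℝ :=
  1 / 2 * gNorm K u ^ 2 - μ / twoStar n s * (∫ x in Ω, |u x| ^ twoStar n s)

/-- The functional `Ẽ_{λ,μ}`. -/
def energyTilde {n : ℕ} (s : ℝ) (K : EV n → ℝ) (Ω : Set (EV n)) (μ lam : ℝ)
    (g : ℝ → ℝ) (u : EV n → ℝ) : ℝ :=
  μ / twoStar n s * (∫ x in Ω, |u x| ^ twoStar n s)
    + lam * ∫ x in Ω, (∫ τ in (0:ℝ)..(u x), g τ)

/-- The energy functional of the singular problem. -/
def energySing {n : ℕ} (s : ℝ) (K : EV n → ℝ) (Ω : Set (EV n)) (μ lam r : ℝ)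
    (g : ℝ → ℝ) (u : EV n → ℝ) : ℝ :=
  1 / 2 * gNorm K u ^ 2 - μ / twoStar n s * (∫ x in Ω, (max (u x) 0) ^ twoStar n s)
    - lam / r * (∫ x in Ω, (max (u x) 0) ^ r)
    - lam * ∫ x in Ω, (∫ τ in (0:ℝ)..(max (u x) 0), g τ)

namespace Aux

variable {n : ℕ} {K : EV n → ℝ} {Ω : Set (EV n)}

/-- integrand of the bilinear form -/
def J (K : EV n → ℝ) (u v : EV n → ℝ) : EV n × EV n → ℝ :=
  fun p => (u p.1 - u p.2) * (v p.1 - v p.2) * K (p.1 - p.2)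

lemma gInner_eq (u v : EV n → ℝ) : gInner K u v = ∫ p, J K u v p := rfl

lemma fin_iff (u : EV n → ℝ) :
    Integrable (fun p : EV n × EV n => (u p.1 - u p.2) ^ 2 * K (p.1 - p.2))
      ↔ Integrable (J K u u) := by
  apply integrable_congr
  filter_upwards with p
  simp [J, sq]

lemma J_self_nonneg (hKpos : ∀ x : EV n, x ≠ 0 → 0 < K x) (u : EV n → ℝ)
    (p : EV n × EV n) : 0 ≤ J K u u p := by
  rcases eq_or_ne p.1 p.2 with h | h
  · simp [J, h]
  · have : p.1 - p.2 ≠ 0 := sub_ne_zero.2 h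
    exact mul_nonneg (mul_self_nonneg _) (hKpos _ this).le

lemma gInner_self_nonneg (hKpos : ∀ x : EV n, x ≠ 0 → 0 < K x) (u : EV n → ℝ) :
    0 ≤ gInner K u u :=
  integral_nonneg (J_self_nonneg hKpos u)

lemma gNorm_nonneg (u : EV n → ℝ) : 0 ≤ gNorm K u := Real.sqrt_nonneg _

lemma gNorm_sq (hKpos : ∀ x : EV n, x ≠ 0 → 0 < K x) (u : EV n → ℝ) :
    gNorm K u ^ 2 = gInner K u u :=
  Real.sq_sqrt (gInner_self_nonneg hKpos u)

end Aux

namespace Aux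
variable {n : ℕ} {K : EV n → ℝ} {Ω : Set (EV n)}

section Kernel
variable [Nontrivial (EV n)]

lemma exists_Kmeas (hKpos : ∀ x : EV n, x ≠ 0 → 0 < K x)
    (hK1 : Integrable (fun x : EV n => min (‖x‖ ^ 2) 1 * K x)) :
    ∃ K' : EV n → ℝ, Measurable K' ∧ K' =ᵐ[(volume : Measure (EV n))] K := by
  obtain ⟨g, hg, hfg⟩ := hK1.aestronglyMeasurable
  refine ⟨fun x => g x / min (‖x‖ ^ 2) 1, hg.measurable.div
    ((measurable_norm.pow_const 2).min measurable_const), ?_⟩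
  have h0 : ∀ᵐ x ∂(volume : Measure (EV n)), x ≠ 0 := by
    rw [ae_iff]
    simpa using measure_singleton (0 : EV n)
  filter_upwards [hfg, h0] with x hx hx0
  have hm : 0 < min (‖x‖ ^ 2) 1 := by
    have : 0 < ‖x‖ := norm_pos_iff.2 hx0
    positivity
  rw [← hx]
  field_simp

/-- transfer a null set along `p ↦ p.1 - p.2` -/
lemma ae_sub_transfer {P : EV n → Prop} (h : ∀ᵐ x ∂(volume : Measure (EV n)), P x) :
    ∀ᵐ p : EV n × EV n ∂(volume : Measure (EV n × EV n)), P (p.1 - p.2) := by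
  rw [Measure.volume_eq_prod]
  have hmp := (measurePreserving_sub_prod (volume : Measure (EV n)) volume).quasiMeasurePreserving
  have hnull : (volume.prod (volume : Measure (EV n))) ({x | ¬ P x} ×ˢ univ) = 0 := by
    rw [Measure.prod_prod]
    rw [ae_iff] at h
    simp [h]
  have := hmp.preimage_null hnull
  rw [ae_iff]
  refine measure_mono_null (fun p hp => ?_) this
  simp only [mem_preimage, mem_prod, mem_setOf_eq, mem_univ, and_true]
  exact hp

end Kernel
end Aux

namespace Aux
variable {n : ℕ} {K K' : EV n → ℝ} {Ω : Set (EV n)} [Nontrivial (EV n)]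

lemma prodEq (hK'ae : K' =ᵐ[(volume : Measure (EV n))] K) :
    ∀ᵐ p : EV n × EV n ∂volume, K' (p.1 - p.2) = K (p.1 - p.2) :=
  ae_sub_transfer hK'ae

lemma K'nn (hKpos : ∀ x : EV n, x ≠ 0 → 0 < K x)
    (hK'ae : K' =ᵐ[(volume : Measure (EV n))] K) :
    ∀ᵐ x ∂(volume : Measure (EV n)), 0 ≤ K' x := by
  have h0 : ∀ᵐ x ∂(volume : Measure (EV n)), x ≠ 0 := by
    rw [ae_iff]; simpa using measure_singleton (0 : EV n)
  filter_upwards [hK'ae, h0] with x hx hx0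
  rw [hx]; exact (hKpos x hx0).le

lemma prodNN (hKpos : ∀ x : EV n, x ≠ 0 → 0 < K x)
    (hK'ae : K' =ᵐ[(volume : Measure (EV n))] K) :
    ∀ᵐ p : EV n × EV n ∂volume, 0 ≤ K' (p.1 - p.2) :=
  ae_sub_transfer (K'nn hKpos hK'ae)

lemma J_congr (u v : EV n → ℝ) (hK'ae : K' =ᵐ[(volume : Measure (EV n))] K) :
    J K' u v =ᵐ[(volume : Measure (EV n × EV n))] J K u v := by
  filter_upwards [prodEq hK'ae] with p hp
  simp only [J, hp]

lemma J_meas (hK'm : Measurable K') {u v : EV n → ℝ} (hu : Measurable u)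
    (hv : Measurable v) : Measurable (J K' u v) :=
  (((hu.comp measurable_fst).sub (hu.comp measurable_snd)).mul
    ((hv.comp measurable_fst).sub (hv.comp measurable_snd))).mul
    (hK'm.comp (measurable_fst.sub measurable_snd))

/-- cross-term integrability -/
lemma J_cross_integrable (hKpos : ∀ x : EV n, x ≠ 0 → 0 < K x)
    (hK'm : Measurable K') (hK'ae : K' =ᵐ[(volume : Measure (EV n))] K)
    {u v : EV n → ℝ} (hu : Measurable u) (hv : Measurable v)
    (hiu : Integrable (J K u u)) (hiv : Integrable (J K v v)) :
    Integrable (J K u v) := by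
  have hiu' : Integrable (J K' u u) := hiu.congr (J_congr u u hK'ae).symm
  have hiv' : Integrable (J K' v v) := hiv.congr (J_congr v v hK'ae).symm
  have hint : Integrable (J K' u v) := by
    refine Integrable.mono' ((hiu'.add hiv').const_mul (1/2 : ℝ))
      (J_meas hK'm hu hv).aestronglyMeasurable ?_
    filter_upwards [prodNN hKpos hK'ae] with p hp
    simp only [J, Pi.add_apply, norm_mul, Real.norm_eq_abs]
    rw [abs_of_nonneg hp]
    nlinarith [abs_nonneg (u p.1 - u p.2), abs_nonneg (v p.1 - v p.2),
      sq_abs (u p.1 - u p.2), sq_abs (v p.1 - v p.2),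
      sq_nonneg (|u p.1 - u p.2| - |v p.1 - v p.2|), abs_mul (u p.1 - u p.2) (v p.1 - v p.2)]
  exact hint.congr (J_congr u v hK'ae)

end Aux

namespace Aux
variable {n : ℕ} {K K' : EV n → ℝ} {Ω : Set (EV n)} [Nontrivial (EV n)]

lemma gInner_comm (u v : EV n → ℝ) : gInner K u v = gInner K v u := by
  unfold gInner; congr 1; funext p; ring

/-- expansion of the quadratic form along a line -/
lemma gInner_expand (hKpos : ∀ x : EV n, x ≠ 0 → 0 < K x)
    (hK'm : Measurable K') (hK'ae : K' =ᵐ[(volume : Measure (EV n))] K)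
    {u v : EV n → ℝ} (hu : Measurable u) (hv : Measurable v)
    (hiu : Integrable (J K u u)) (hiv : Integrable (J K v v)) (t : ℝ) :
    gInner K (fun x => u x + t * v x) (fun x => u x + t * v x)
      = gInner K u u + 2 * t * gInner K u v + t ^ 2 * gInner K v v := by
  have hiuv : Integrable (J K u v) := J_cross_integrable hKpos hK'm hK'ae hu hv hiu hiv
  have hpt : J K (fun x => u x + t * v x) (fun x => u x + t * v x)
      = fun p => J K u u p + (2 * t * J K u v p + t ^ 2 * J K v v p) := by
    funext p; simp only [J]; ring
  rw [gInner_eq, hpt]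
  show ∫ p : EV n × EV n, J K u u p + (2 * t * J K u v p + t ^ 2 * J K v v p) = _
  have hg1 : Integrable (fun p : EV n × EV n => 2 * t * J K u v p + t ^ 2 * J K v v p) :=
    by exact ((hiuv.const_mul _).add (hiv.const_mul _))
  have hg2 : Integrable (fun p : EV n × EV n => 2 * t * J K u v p) := by exact hiuv.const_mul _
  have hg3 : Integrable (fun p : EV n × EV n => t ^ 2 * J K v v p) := by exact hiv.const_mul _
  rw [integral_add hiu hg1, integral_add hg2 hg3, integral_const_mul, integral_const_mul]
  rw [gInner_eq, gInner_eq, gInner_eq]; ring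

lemma gInner_sub_left {u v w : EV n → ℝ}
    (hiuw : Integrable (J K u w)) (hivw : Integrable (J K v w)) :
    gInner K (fun x => u x - v x) w = gInner K u w - gInner K v w := by
  have hpt : J K (fun x => u x - v x) w = fun p => J K u w p - J K v w p := by
    funext p; simp only [J]; ring
  rw [gInner_eq, hpt]
  show ∫ p : EV n × EV n, J K u w p - J K v w p = _
  rw [integral_sub hiuw hivw, gInner_eq, gInner_eq]

/-- Cauchy–Schwarz -/
lemma gInner_sq_le (hKpos : ∀ x : EV n, x ≠ 0 → 0 < K x)
    (hK'm : Measurable K') (hK'ae : K' =ᵐ[(volume : Measure (EV n))] K)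
    {u v : EV n → ℝ} (hu : Measurable u) (hv : Measurable v)
    (hiu : Integrable (J K u u)) (hiv : Integrable (J K v v)) :
    gInner K u v ^ 2 ≤ gInner K u u * gInner K v v := by
  have hq : ∀ t : ℝ, 0 ≤ gInner K v v * (t * t) + (2 * gInner K u v) * t + gInner K u u := by
    intro t
    have := gInner_self_nonneg (K := K) hKpos (fun x => u x + t * v x)
    rw [gInner_expand hKpos hK'm hK'ae hu hv hiu hiv t] at this
    nlinarith [this]
  have := discrim_le_zero hq
  rw [discrim] at this
  nlinarith [this]

lemma abs_gInner_le (hKpos : ∀ x : EV n, x ≠ 0 → 0 < K x)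
    (hK'm : Measurable K') (hK'ae : K' =ᵐ[(volume : Measure (EV n))] K)
    {u v : EV n → ℝ} (hu : Measurable u) (hv : Measurable v)
    (hiu : Integrable (J K u u)) (hiv : Integrable (J K v v)) :
    |gInner K u v| ≤ gNorm K u * gNorm K v := by
  have h := gInner_sq_le hKpos hK'm hK'ae hu hv hiu hiv
  have : |gInner K u v| = Real.sqrt (gInner K u v ^ 2) := (Real.sqrt_sq_eq_abs _).symm
  rw [this, gNorm, gNorm, ← Real.sqrt_mul (gInner_self_nonneg hKpos u)]
  exact Real.sqrt_le_sqrt h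

end Aux

namespace Aux
variable {n : ℕ} {K K' : EV n → ℝ} {Ω : Set (EV n)} [Nontrivial (EV n)]

lemma memX0_sub (hKpos : ∀ x : EV n, x ≠ 0 → 0 < K x)
    (hK'm : Measurable K') (hK'ae : K' =ᵐ[(volume : Measure (EV n))] K)
    {u v : EV n → ℝ} (hu : MemX0 K Ω u) (hv : MemX0 K Ω v) :
    MemX0 K Ω (fun x => u x - v x) := by
  refine ⟨hu.meas.sub hv.meas, ?_, ?_⟩
  · filter_upwards [hu.zero, hv.zero] with x h1 h2 hx
    rw [h1 hx, h2 hx, sub_zero]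
  · have hiu : Integrable (J K u u) := (fin_iff u).1 hu.fin
    have hiv : Integrable (J K v v) := (fin_iff v).1 hv.fin
    have hiu' : Integrable (J K' u u) := hiu.congr (J_congr u u hK'ae).symm
    have hiv' : Integrable (J K' v v) := hiv.congr (J_congr v v hK'ae).symm
    have : Integrable (J K' (fun x => u x - v x) (fun x => u x - v x)) := by
      refine Integrable.mono' ((hiu'.add hiv').const_mul (2 : ℝ))
        (J_meas hK'm (hu.meas.sub hv.meas) (hu.meas.sub hv.meas)).aestronglyMeasurable ?_
      filter_upwards [prodNN hKpos hK'ae] with p hp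
      simp only [J, Pi.add_apply, norm_mul, Real.norm_eq_abs]
      rw [abs_of_nonneg hp]
      nlinarith [sq_nonneg ((u p.1 - u p.2) + (v p.1 - v p.2)),
        sq_nonneg ((u p.1 - u p.2) - (v p.1 - v p.2)),
        abs_nonneg ((u p.1 - v p.1) - (u p.2 - v p.2)), hp,
        sq_abs ((u p.1 - v p.1) - (u p.2 - v p.2))]
    exact (fin_iff (fun x => u x - v x)).2 (this.congr (J_congr _ _ hK'ae))

lemma gNorm_sub_le (hKpos : ∀ x : EV n, x ≠ 0 → 0 < K x)
    (hK'm : Measurable K') (hK'ae : K' =ᵐ[(volume : Measure (EV n))] K)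
    {u v : EV n → ℝ} (hu : Measurable u) (hv : Measurable v)
    (hiu : Integrable (J K u u)) (hiv : Integrable (J K v v)) :
    gNorm K (fun x => u x - v x) ≤ gNorm K u + gNorm K v := by
  have hiuv : Integrable (J K u v) := J_cross_integrable hKpos hK'm hK'ae hu hv hiu hiv
  have hexp : gInner K (fun x => u x - v x) (fun x => u x - v x)
      = gInner K u u - 2 * gInner K u v + gInner K v v := by
    have := gInner_expand hKpos hK'm hK'ae hu hv hiu hiv (-1)
    simp only [neg_one_sq, one_mul, mul_neg_one] at this
    calc gInner K (fun x => u x - v x) (fun x => u x - v x)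
        = gInner K (fun x => u x + (-1) * v x) (fun x => u x + (-1) * v x) := by
          congr 1 <;> funext x <;> ring
      _ = gInner K u u - 2 * gInner K u v + gInner K v v := by rw [this]; ring
  have hcs := abs_gInner_le hKpos hK'm hK'ae hu hv hiu hiv
  have h1 : gInner K (fun x => u x - v x) (fun x => u x - v x)
      ≤ (gNorm K u + gNorm K v) ^ 2 := by
    rw [hexp, ← gNorm_sq hKpos u, ← gNorm_sq hKpos v]
    nlinarith [neg_abs_le (gInner K u v), hcs]
  calc gNorm K (fun x => u x - v x)
      = Real.sqrt (gInner K (fun x => u x - v x) (fun x => u x - v x)) := rfl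
    _ ≤ Real.sqrt ((gNorm K u + gNorm K v) ^ 2) := Real.sqrt_le_sqrt h1
    _ = |gNorm K u + gNorm K v| := Real.sqrt_sq_eq_abs _
    _ = gNorm K u + gNorm K v := abs_of_nonneg (add_nonneg (gNorm_nonneg _) (gNorm_nonneg _))

end Aux

lemma measurable_rpow_of_nonneg {α : Type*} [MeasurableSpace α] {f : α → ℝ}
    (hf : Measurable f) (hfnn : ∀ x, 0 ≤ f x) (c : ℝ) (hc : c ≠ 0) :
    Measurable fun x => f x ^ c := by
  have heq : (fun x => f x ^ c)
      = fun x => if f x = 0 then 0 else Real.exp (Real.log (f x) * c) := by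
    funext x
    by_cases h : f x = 0
    · simp [h, Real.zero_rpow hc]
    · have hpos : 0 < f x := lt_of_le_of_ne (hfnn x) (Ne.symm h)
      simp [h, Real.rpow_def_of_pos hpos]
  rw [heq]
  exact Measurable.ite (hf (measurableSet_singleton 0)) measurable_const
    (((Real.measurable_log.comp hf).mul_const c).exp)

namespace Aux
variable {n : ℕ} {K K' : EV n → ℝ} {Ω : Set (EV n)} [Nontrivial (EV n)]

lemma diag_null :
    (volume : Measure (EV n × EV n)) {p : EV n × EV n | p.1 = p.2} = 0 := by
  rw [Measure.volume_eq_prod]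
  have hm : MeasurableSet {p : EV n × EV n | p.1 = p.2} :=
    (isClosed_eq continuous_fst continuous_snd).measurableSet
  rw [Measure.prod_apply hm]
  have : ∀ x : EV n, (volume : Measure (EV n)) (Prod.mk x ⁻¹' {p : EV n × EV n | p.1 = p.2}) = 0 := by
    intro x
    have h : Prod.mk x ⁻¹' {p : EV n × EV n | p.1 = p.2} = {x} := by
      ext y; simp [eq_comm]
    rw [h]
    exact measure_singleton x
  simp [this]

lemma ae_zero_of_gInner_zero {s : ℝ}
    (hKpos : ∀ x : EV n, x ≠ 0 → 0 < K x)
    (hK2 : ∃ k₀ > 0, ∀ x : EV n, x ≠ 0 → k₀ * ‖x‖ ^ (-((n : ℝ) + 2 * s)) ≤ K x)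
    (hΩb : Bornology.IsBounded Ω)
    {u : EV n → ℝ} (hu : MemX0 K Ω u) (h0 : gInner K u u = 0) :
    ∀ᵐ x ∂(volume : Measure (EV n)), u x = 0 := by
  obtain ⟨k₀, hk₀, hK2⟩ := hK2
  set g : EV n × EV n → ℝ :=
    fun p => k₀ * ((u p.1 - u p.2) ^ 2 * ‖p.1 - p.2‖ ^ (-((n : ℝ) + 2 * s))) with hg
  have hiJ : Integrable (J K u u) := (fin_iff u).1 hu.fin
  have hgnn : ∀ p, 0 ≤ g p := by
    intro p
    have : (0:ℝ) ≤ ‖p.1 - p.2‖ ^ (-((n : ℝ) + 2 * s)) := Real.rpow_nonneg (norm_nonneg _) _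
    have hd : (0:ℝ) ≤ (u p.1 - u p.2) ^ 2 := sq_nonneg _
    simp only [hg]
    positivity
  have hgle : ∀ p, g p ≤ J K u u p := by
    intro p
    rcases eq_or_ne p.1 p.2 with h | h
    · simp [hg, J, h, sub_self]
    · have hne : p.1 - p.2 ≠ 0 := sub_ne_zero.2 h
      have hb := hK2 _ hne
      have hd : (0:ℝ) ≤ (u p.1 - u p.2) ^ 2 := sq_nonneg _
      calc g p = (u p.1 - u p.2) ^ 2 * (k₀ * ‖p.1 - p.2‖ ^ (-((n : ℝ) + 2 * s))) := by
            simp only [hg]; ring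
        _ ≤ (u p.1 - u p.2) ^ 2 * K (p.1 - p.2) := mul_le_mul_of_nonneg_left hb hd
        _ = J K u u p := by simp [J, sq]
  have hexpne : -((n : ℝ) + 2 * s) ≠ 0 ∨ True := Or.inr trivial
  have hgmeas : Measurable g := by
    apply Measurable.const_mul
    refine Measurable.mul ?_ ?_
    · exact ((hu.meas.comp measurable_fst).sub (hu.meas.comp measurable_snd)).pow_const 2
    · by_cases hc : -((n : ℝ) + 2 * s) = 0
      · simp only [hc, Real.rpow_zero]; exact measurable_const
      · exact measurable_rpow_of_nonneg (measurable_fst.sub measurable_snd).norm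
          (fun p => norm_nonneg _) _ hc
  have hgint : Integrable g :=
    Integrable.mono' hiJ hgmeas.aestronglyMeasurable
      (Eventually.of_forall fun p => by
        rw [Real.norm_eq_abs, abs_of_nonneg (hgnn p)]; exact hgle p)
  have hint0 : ∫ p, g p = 0 := by
    have h1 : ∫ p, g p ≤ ∫ p, J K u u p := integral_mono hgint hiJ hgle
    have h2 : (0:ℝ) ≤ ∫ p, g p := integral_nonneg hgnn
    rw [← gInner_eq, h0] at h1
    linarith
  have hae : ∀ᵐ p : EV n × EV n ∂volume, g p = 0 := by
    have := (integral_eq_zero_iff_of_nonneg hgnn hgint).1 hint0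
    exact this
  have hdiag : ∀ᵐ p : EV n × EV n ∂volume, p.1 ≠ p.2 := by
    rw [ae_iff]
    convert diag_null (n := n) using 2
    ext p; simp
  have huu : ∀ᵐ p : EV n × EV n ∂volume, u p.1 = u p.2 := by
    filter_upwards [hae, hdiag] with p hp hne
    have hrpos : (0:ℝ) < ‖p.1 - p.2‖ ^ (-((n : ℝ) + 2 * s)) :=
      Real.rpow_pos_of_pos (norm_pos_iff.2 (sub_ne_zero.2 hne)) _
    simp only [hg] at hp
    have : (u p.1 - u p.2) ^ 2 = 0 := by
      rcases mul_eq_zero.1 hp with h | h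
      · exact absurd h (ne_of_gt hk₀)
      · rcases mul_eq_zero.1 h with h' | h'
        · exact h'
        · exact absurd h' (ne_of_gt hrpos)
    have := pow_eq_zero_iff (n := 2) (by norm_num) |>.1 this
    linarith [this]
  have hxy : ∀ᵐ x ∂(volume : Measure (EV n)), ∀ᵐ y ∂(volume : Measure (EV n)), u x = u y := by
    rw [Measure.volume_eq_prod] at huu
    exact Measure.ae_ae_of_ae_prod huu
  have hQ : ∀ᵐ x ∂(volume : Measure (EV n)),
      (∀ᵐ y ∂(volume : Measure (EV n)), u x = u y) ∧ (x ∉ Ω → u x = 0) := hxy.and hu.zero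
  have huniv : (volume : Measure (EV n)) univ = ∞ := measure_univ_of_isAddLeftInvariant _
  have hcne : (volume : Measure (EV n)) Ωᶜ ≠ 0 := by
    intro h
    have h1 : (volume : Measure (EV n)) univ ≤ volume Ω + volume Ωᶜ := by
      rw [← union_compl_self Ω]
      exact measure_union_le _ _
    rw [huniv, h, add_zero] at h1
    exact absurd (lt_of_le_of_lt h1 hΩb.measure_lt_top) (lt_irrefl _)
  obtain ⟨x₀, hx₀c, hx₀Q⟩ : ∃ x₀, x₀ ∈ Ωᶜ ∧
      ((∀ᵐ y ∂(volume : Measure (EV n)), u x₀ = u y) ∧ (x₀ ∉ Ω → u x₀ = 0)) := by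
    by_contra hcon
    push_neg at hcon
    apply hcne
    refine measure_mono_null (fun x hx => ?_) (ae_iff.1 hQ)
    simp only [mem_setOf_eq]
    intro hAB
    exact (hcon x hx hAB.1).2 (hAB.2 hx)
  have hx0 : u x₀ = 0 := hx₀Q.2 hx₀c
  filter_upwards [hx₀Q.1] with y hy
  rw [← hy, hx0]

end Aux

namespace Aux
variable {n : ℕ} {K K' : EV n → ℝ} {Ω : Set (EV n)} [Nontrivial (EV n)]

lemma trunc_abs (a N : ℝ) (hN : 0 ≤ N) : |max (min a N) (-N)| = min |a| N := by
  rcases le_total 0 a with h | h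
  · rcases le_total a N with h' | h'
    · rw [min_eq_left h', max_eq_left (by linarith), abs_of_nonneg h, min_eq_left h']
    · rw [min_eq_right h', max_eq_left (by linarith), abs_of_nonneg hN, abs_of_nonneg h,
        min_eq_right h']
  · rcases le_total (-N) a with h' | h'
    · rw [min_eq_left (le_trans h hN), max_eq_left h', abs_of_nonpos h,
        min_eq_left (by linarith)]
    · rw [min_eq_left (le_trans h hN), max_eq_right h', abs_neg, abs_of_nonneg hN,
        abs_of_nonpos h, min_eq_right (by linarith)]

lemma trunc_contract (a b N : ℝ) : |max (min a N) (-N) - max (min b N) (-N)| ≤ |a - b| := by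
  refine le_trans (abs_max_sub_max_le_abs _ _ _) ?_
  have := abs_min_sub_min_le_max a N b N
  simpa using this

/-- truncation -/
def Tr (N : ℕ) (u : EV n → ℝ) : EV n → ℝ := fun x => max (min (u x) (N : ℝ)) (-(N : ℝ))

lemma Tr_memX0 (hKpos : ∀ x : EV n, x ≠ 0 → 0 < K x)
    (hK'm : Measurable K') (hK'ae : K' =ᵐ[(volume : Measure (EV n))] K)
    {u : EV n → ℝ} (hu : MemX0 K Ω u) (N : ℕ) : MemX0 K Ω (Tr N u) := by
  have hm : Measurable (Tr N u) := (hu.meas.min measurable_const).max measurable_const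
  refine ⟨hm, ?_, ?_⟩
  · filter_upwards [hu.zero] with x hx hxo
    simp [Tr, hx hxo, min_eq_left (Nat.cast_nonneg N : (0:ℝ) ≤ N)]
  · have hiu : Integrable (J K u u) := (fin_iff u).1 hu.fin
    have hiu' : Integrable (J K' u u) := hiu.congr (J_congr u u hK'ae).symm
    have : Integrable (J K' (Tr N u) (Tr N u)) := by
      refine Integrable.mono' hiu' (J_meas hK'm hm hm).aestronglyMeasurable ?_
      filter_upwards [prodNN hKpos hK'ae] with p hp
      simp only [J, norm_mul, Real.norm_eq_abs]
      rw [abs_of_nonneg hp]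
      have h1 : |Tr N u p.1 - Tr N u p.2| ≤ |u p.1 - u p.2| := trunc_contract _ _ _
      have hsq : |Tr N u p.1 - Tr N u p.2| * |Tr N u p.1 - Tr N u p.2|
          ≤ (u p.1 - u p.2) * (u p.1 - u p.2) := by
        have := mul_self_le_mul_self (abs_nonneg _) h1
        simpa [abs_mul_abs_self] using this
      exact mul_le_mul_of_nonneg_right hsq hp
    exact (fin_iff (Tr N u)).2 (this.congr (J_congr _ _ hK'ae))

lemma Tr_gInner_le (hKpos : ∀ x : EV n, x ≠ 0 → 0 < K x)
    (hK'm : Measurable K') (hK'ae : K' =ᵐ[(volume : Measure (EV n))] K)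
    {u : EV n → ℝ} (hu : MemX0 K Ω u) (N : ℕ) :
    gInner K (Tr N u) (Tr N u) ≤ gInner K u u := by
  have hiu : Integrable (J K u u) := (fin_iff u).1 hu.fin
  have hiT : Integrable (J K (Tr N u) (Tr N u)) :=
    (fin_iff (Tr N u)).1 (Tr_memX0 hKpos hK'm hK'ae hu N).fin
  rw [gInner_eq, gInner_eq]
  refine integral_mono_ae hiT hiu ?_
  filter_upwards [prodNN hKpos hK'ae, prodEq hK'ae] with p hp heq
  simp only [J, ← heq]
  have h1 : |Tr N u p.1 - Tr N u p.2| ≤ |u p.1 - u p.2| := trunc_contract _ _ _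
  have hsq : (Tr N u p.1 - Tr N u p.2) * (Tr N u p.1 - Tr N u p.2)
      ≤ (u p.1 - u p.2) * (u p.1 - u p.2) := by
    rw [← abs_mul_abs_self (Tr N u p.1 - Tr N u p.2), ← abs_mul_abs_self (u p.1 - u p.2)]
    exact mul_self_le_mul_self (abs_nonneg _) h1
  exact mul_le_mul_of_nonneg_right hsq hp

lemma Tr_gNorm_le (hKpos : ∀ x : EV n, x ≠ 0 → 0 < K x)
    (hK'm : Measurable K') (hK'ae : K' =ᵐ[(volume : Measure (EV n))] K)
    {u : EV n → ℝ} (hu : MemX0 K Ω u) (N : ℕ) :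
    gNorm K (Tr N u) ≤ gNorm K u :=
  Real.sqrt_le_sqrt (Tr_gInner_le hKpos hK'm hK'ae hu N)

end Aux


namespace Aux
variable {n : ℕ} {K K' : EV n → ℝ} {Ω : Set (EV n)} [Nontrivial (EV n)]

lemma lpNorm_le {s : ℝ} {c : ℝ} (hc : 0 < c)
    (hKpos : ∀ x : EV n, x ≠ 0 → 0 < K x)
    (hK2 : ∃ k₀ > 0, ∀ x : EV n, x ≠ 0 → k₀ * ‖x‖ ^ (-((n : ℝ) + 2 * s)) ≤ K x)
    (hΩb : Bornology.IsBounded Ω)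
    (hclub : IsLUB {ρ : ℝ | ∃ u, MemX0 K Ω u ∧
        ¬ (∀ᵐ x ∂(volume : Measure (EV n)), u x = 0) ∧
        ρ = lpNorm Ω (twoStar n s) u / gNorm K u} c)
    (hq0 : 0 < twoStar n s)
    {u : EV n → ℝ} (hu : MemX0 K Ω u) :
    lpNorm Ω (twoStar n s) u ≤ c * gNorm K u := by
  by_cases hz : ∀ᵐ x ∂(volume : Measure (EV n)), u x = 0
  · have hint : ∫ x in Ω, |u x| ^ twoStar n s = 0 := by
      rw [← integral_zero (α := EV n) (μ := volume.restrict Ω) (G := ℝ)]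
      apply integral_congr_ae
      filter_upwards [ae_restrict_of_ae hz] with x hx
      rw [hx, abs_zero, Real.zero_rpow (ne_of_gt hq0)]
    rw [_root_.lpNorm, hint, Real.zero_rpow (by positivity)]
    exact mul_nonneg hc.le (gNorm_nonneg _)
  · have hgz : gNorm K u ≠ 0 := by
      intro h
      apply hz
      refine ae_zero_of_gInner_zero hKpos hK2 hΩb hu ?_
      have := Real.sqrt_eq_zero'.1 h
      have hnn := gInner_self_nonneg hKpos u
      linarith
    have hgpos : 0 < gNorm K u := lt_of_le_of_ne (gNorm_nonneg _) (Ne.symm hgz)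
    have hmem : lpNorm Ω (twoStar n s) u / gNorm K u ∈ {ρ : ℝ | ∃ u, MemX0 K Ω u ∧
        ¬ (∀ᵐ x ∂(volume : Measure (EV n)), u x = 0) ∧
        ρ = lpNorm Ω (twoStar n s) u / gNorm K u} := ⟨u, hu, hz, rfl⟩
    have := hclub.1 hmem
    exact (div_le_iff₀ hgpos).1 this

lemma sobolev {s : ℝ} {c : ℝ} (hc : 0 < c)
    (hKpos : ∀ x : EV n, x ≠ 0 → 0 < K x)
    (hK'm : Measurable K') (hK'ae : K' =ᵐ[(volume : Measure (EV n))] K)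
    (hK2 : ∃ k₀ > 0, ∀ x : EV n, x ≠ 0 → k₀ * ‖x‖ ^ (-((n : ℝ) + 2 * s)) ≤ K x)
    (hΩb : Bornology.IsBounded Ω)
    (hclub : IsLUB {ρ : ℝ | ∃ u, MemX0 K Ω u ∧
        ¬ (∀ᵐ x ∂(volume : Measure (EV n)), u x = 0) ∧
        ρ = lpNorm Ω (twoStar n s) u / gNorm K u} c)
    (hq0 : 0 < twoStar n s)
    {u : EV n → ℝ} (hu : MemX0 K Ω u) :
    IntegrableOn (fun x => |u x| ^ twoStar n s) Ω volume ∧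
      ∫ x in Ω, |u x| ^ twoStar n s ≤ c ^ twoStar n s * gNorm K u ^ twoStar n s := by
  set q := twoStar n s with hqdef
  set R := c * gNorm K u with hR
  have hRnn : 0 ≤ R := mul_nonneg hc.le (gNorm_nonneg _)
  haveI hfin : IsFiniteMeasure ((volume : Measure (EV n)).restrict Ω) :=
    ⟨by rw [Measure.restrict_apply_univ]; exact hΩb.measure_lt_top⟩
  have hqmeas : ∀ v : EV n → ℝ, Measurable v → Measurable fun x => |v x| ^ q :=
    fun v hv => (Real.continuous_rpow_const hq0.le).measurable.comp hv.abs
  -- integral bound for each truncation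
  have htrunc : ∀ N : ℕ, ∫ x in Ω, |Tr N u x| ^ q ≤ R ^ q := by
    intro N
    have hTmem := Tr_memX0 (Ω := Ω) hKpos hK'm hK'ae hu N
    have hlp : lpNorm Ω q (Tr N u) ≤ R := by
      refine le_trans (lpNorm_le hc hKpos hK2 hΩb hclub hq0 hTmem) ?_
      exact mul_le_mul_of_nonneg_left (Tr_gNorm_le hKpos hK'm hK'ae hu N) hc.le
    have hX : (0:ℝ) ≤ ∫ x in Ω, |Tr N u x| ^ q :=
      integral_nonneg fun x => Real.rpow_nonneg (abs_nonneg _) _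
    have hXq : ((∫ x in Ω, |Tr N u x| ^ q) ^ (1/q)) ^ q = ∫ x in Ω, |Tr N u x| ^ q := by
      rw [← Real.rpow_mul hX, one_div_mul_cancel (ne_of_gt hq0), Real.rpow_one]
    calc ∫ x in Ω, |Tr N u x| ^ q = ((∫ x in Ω, |Tr N u x| ^ q) ^ (1/q)) ^ q := hXq.symm
      _ ≤ R ^ q := Real.rpow_le_rpow (Real.rpow_nonneg hX _) hlp hq0.le
  have hTint : ∀ N : ℕ, Integrable (fun x => |Tr N u x| ^ q)
      ((volume : Measure (EV n)).restrict Ω) := by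
    intro N
    refine Integrable.mono' (integrable_const ((N:ℝ) ^ q))
      ((hqmeas _ ((hu.meas.min measurable_const).max measurable_const)).aestronglyMeasurable) ?_
    filter_upwards with x
    rw [Real.norm_eq_abs, abs_of_nonneg (Real.rpow_nonneg (abs_nonneg _) _)]
    refine Real.rpow_le_rpow (abs_nonneg _) ?_ hq0.le
    rw [Tr, trunc_abs _ _ (Nat.cast_nonneg N)]
    exact min_le_right _ _
  -- monotone convergence
  have habs : ∀ x, ∀ N : ℕ, |Tr N u x| = min |u x| (N:ℝ) :=
    fun x N => trunc_abs _ _ (Nat.cast_nonneg N)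
  have hmono : ∀ x, Monotone fun N : ℕ => ENNReal.ofReal (|Tr N u x| ^ q) := by
    intro x i j hij
    apply ENNReal.ofReal_le_ofReal
    refine Real.rpow_le_rpow (abs_nonneg _) ?_ hq0.le
    rw [habs x i, habs x j]
    exact min_le_min le_rfl (Nat.cast_le.2 hij)
  have hlim : ∀ x, Tendsto (fun N : ℕ => ENNReal.ofReal (|Tr N u x| ^ q)) atTop
      (𝓝 (ENNReal.ofReal (|u x| ^ q))) := by
    intro x
    apply ENNReal.tendsto_ofReal
    have hminlim : Tendsto (fun N : ℕ => min |u x| (N:ℝ)) atTop (𝓝 |u x|) := by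
      refine tendsto_atTop_of_eventually_const (i₀ := ⌈|u x|⌉₊) fun i hi => ?_
      exact min_eq_left (le_trans (Nat.le_ceil _) (Nat.cast_le.2 hi))
    have := ((Real.continuous_rpow_const hq0.le).tendsto |u x|).comp hminlim
    refine Tendsto.congr (fun N => ?_) this
    simp only [Function.comp_apply, habs x N]
  have hmc : Tendsto (fun N : ℕ => ∫⁻ x in Ω, ENNReal.ofReal (|Tr N u x| ^ q) ∂volume) atTop
      (𝓝 (∫⁻ x in Ω, ENNReal.ofReal (|u x| ^ q) ∂volume)) := by
    refine lintegral_tendsto_of_tendsto_of_monotone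
      (fun N => (ENNReal.measurable_ofReal.comp
        (hqmeas _ ((hu.meas.min measurable_const).max measurable_const))).aemeasurable)
      (Eventually.of_forall fun x => hmono x) (Eventually.of_forall fun x => hlim x)
  have hboundN : ∀ N : ℕ, ∫⁻ x in Ω, ENNReal.ofReal (|Tr N u x| ^ q) ∂volume
      ≤ ENNReal.ofReal (R ^ q) := by
    intro N
    rw [← MeasureTheory.ofReal_integral_eq_lintegral_ofReal (hTint N)
      (Eventually.of_forall fun x => Real.rpow_nonneg (abs_nonneg _) _)]
    exact ENNReal.ofReal_le_ofReal (htrunc N)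
  have hlbound : ∫⁻ x in Ω, ENNReal.ofReal (|u x| ^ q) ∂volume ≤ ENNReal.ofReal (R ^ q) :=
    le_of_tendsto' hmc hboundN
  have hlne : ∫⁻ x in Ω, ENNReal.ofReal (|u x| ^ q) ∂volume ≠ ∞ :=
    ne_top_of_le_ne_top ENNReal.ofReal_ne_top hlbound
  have hIntOn : IntegrableOn (fun x => |u x| ^ q) Ω volume := by
    refine ⟨(hqmeas _ hu.meas).aestronglyMeasurable, ?_⟩
    rw [hasFiniteIntegral_iff_norm]
    have : ∀ x, ENNReal.ofReal ‖|u x| ^ q‖ = ENNReal.ofReal (|u x| ^ q) := fun x => by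
      rw [Real.norm_eq_abs, abs_of_nonneg (Real.rpow_nonneg (abs_nonneg _) _)]
    calc ∫⁻ x in Ω, ENNReal.ofReal ‖|u x| ^ q‖ ∂volume
        = ∫⁻ x in Ω, ENNReal.ofReal (|u x| ^ q) ∂volume := by
          apply lintegral_congr; intro x; rw [this x]
      _ < ∞ := lt_of_le_of_lt hlbound ENNReal.ofReal_lt_top
  refine ⟨hIntOn, ?_⟩
  have hval : ∫ x in Ω, |u x| ^ q
      = (∫⁻ x in Ω, ENNReal.ofReal (|u x| ^ q) ∂volume).toReal := by
    rw [integral_eq_lintegral_of_nonneg_ae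
      (Eventually.of_forall fun x => Real.rpow_nonneg (abs_nonneg _) _)
      (hqmeas _ hu.meas).aestronglyMeasurable.restrict]
  rw [hval]
  calc (∫⁻ x in Ω, ENNReal.ofReal (|u x| ^ q) ∂volume).toReal
      ≤ (ENNReal.ofReal (R ^ q)).toReal := ENNReal.toReal_mono ENNReal.ofReal_ne_top hlbound
    _ = R ^ q := ENNReal.toReal_ofReal (Real.rpow_nonneg hRnn _)
    _ = c ^ q * gNorm K u ^ q := Real.mul_rpow hc.le (gNorm_nonneg _)

end Aux

namespace Aux

/-- convexity inequality: `(x+y)^q ≤ (1-θ)^(1-q) x^q + θ^(1-q) y^q` -/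
lemma rpow_add_le {q θ : ℝ} (hq : 1 ≤ q) (hθ0 : 0 < θ) (hθ1 : θ < 1)
    {x y : ℝ} (hx : 0 ≤ x) (hy : 0 ≤ y) :
    (x + y) ^ q ≤ (1 - θ) ^ (1 - q) * x ^ q + θ ^ (1 - q) * y ^ q := by
  have h1θ : 0 < 1 - θ := by linarith
  have hcx := (convexOn_rpow hq).2 (mem_Ici.2 (div_nonneg hx h1θ.le))
    (mem_Ici.2 (div_nonneg hy hθ0.le)) h1θ.le hθ0.le (by ring)
  simp only [smul_eq_mul] at hcx
  have hxe : (1 - θ) * (x / (1 - θ)) = x := by field_simp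
  have hye : θ * (y / θ) = y := by field_simp
  rw [hxe, hye] at hcx
  refine le_trans hcx (le_of_eq ?_)
  rw [Real.div_rpow hx h1θ.le, Real.div_rpow hy hθ0.le]
  rw [Real.rpow_sub h1θ, Real.rpow_sub hθ0, Real.rpow_one, Real.rpow_one]
  field_simp

/-- one-sided Brezis–Lieb estimate -/
lemma bl_eventually {α : Type*} [MeasurableSpace α] {μ : Measure α} {q : ℝ} (hq1 : 1 < q)
    (f : ℕ → α → ℝ) (g : α → ℝ) (hfm : ∀ k, Measurable (f k)) (hgm : Measurable g)
    (hfi : ∀ k, Integrable (fun x => |f k x| ^ q) μ)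
    (hvi : ∀ k, Integrable (fun x => |f k x - g x| ^ q) μ)
    (hgi : Integrable (fun x => |g x| ^ q) μ)
    (A : ℝ) (hA : ∀ k, ∫ x, |f k x - g x| ^ q ∂μ ≤ A)
    (hae : ∀ᵐ x ∂μ, Tendsto (fun k => f k x) atTop (𝓝 (g x)))
    {ε : ℝ} (hε : 0 < ε) :
    ∀ᶠ k in atTop,
      (∫ x, |f k x| ^ q ∂μ) - (∫ x, |f k x - g x| ^ q ∂μ) - (∫ x, |g x| ^ q ∂μ) ≤ ε := by
  have hq0 : (0:ℝ) < q := by linarith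
  have hA0 : 0 ≤ A :=
    le_trans (integral_nonneg fun x => Real.rpow_nonneg (abs_nonneg _) _) (hA 0)
  set δ : ℝ := ε / (2 * (A + 1)) with hδdef
  have hδ0 : 0 < δ := by positivity
  have hδA : δ * A ≤ ε / 2 := by
    rw [hδdef, div_mul_eq_mul_div, div_le_div_iff₀ (by positivity) (by norm_num)]
    nlinarith
  -- choose θ
  obtain ⟨θ, hθbound, hθ0, hθ1⟩ :
      ∃ θ : ℝ, (1 - θ) ^ (1 - q) < 1 + δ ∧ 0 < θ ∧ θ < 1 := by
    have hcont : ContinuousAt (fun θ : ℝ => (1 - θ) ^ (1 - q)) 0 := by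
      have h1 : ContinuousAt (fun t : ℝ => t ^ (1 - q)) ((fun θ : ℝ => 1 - θ) 0) := by
        simp only [sub_zero]
        exact Real.continuousAt_rpow_const 1 (1 - q) (Or.inl one_ne_zero)
      exact h1.comp ((continuous_const.sub continuous_id).continuousAt)
    have htd : Tendsto (fun θ : ℝ => (1 - θ) ^ (1 - q)) (𝓝[>] (0:ℝ))
        (𝓝 ((1 - (0:ℝ)) ^ (1 - q))) := hcont.continuousWithinAt.tendsto
    have hval : ((1:ℝ) - (0:ℝ)) ^ (1 - q) = 1 := by
      rw [sub_zero, Real.one_rpow]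
    rw [hval] at htd
    have hev : ∀ᶠ θ in 𝓝[>] (0:ℝ), (1 - θ) ^ (1 - q) < 1 + δ :=
      htd.eventually_lt_const (by linarith)
    have hev2 : ∀ᶠ θ in 𝓝[>] (0:ℝ), θ ∈ Ioo (0:ℝ) 1 :=
      Ioo_mem_nhdsGT_of_mem ⟨le_refl 0, zero_lt_one⟩
    obtain ⟨θ, h1, h2⟩ := (hev.and hev2).exists
    exact ⟨θ, h1, h2.1, h2.2⟩
  set C : ℝ := θ ^ (1 - q) with hCdef
  have hC1 : 1 ≤ C := by
    rw [hCdef]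
    exact Real.one_le_rpow_of_pos_of_le_one_of_nonpos hθ0 hθ1.le (by linarith)
  -- pointwise key inequality : |f| ^ q ≤ (1+δ) |f-g|^q + C |g|^q
  have hkey : ∀ k x, |f k x| ^ q ≤ (1 + δ) * |f k x - g x| ^ q + C * |g x| ^ q := by
    intro k x
    have h1 : |f k x| ≤ |f k x - g x| + |g x| := by
      calc |f k x| = |(f k x - g x) + g x| := by ring_nf
        _ ≤ |f k x - g x| + |g x| := abs_add_le _ _
    have h2 : |f k x| ^ q ≤ (|f k x - g x| + |g x|) ^ q :=
      Real.rpow_le_rpow (abs_nonneg _) h1 hq0.le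
    refine le_trans h2 (le_trans (rpow_add_le hq1.le hθ0 hθ1 (abs_nonneg _) (abs_nonneg _)) ?_)
    have hvq : 0 ≤ |f k x - g x| ^ q := Real.rpow_nonneg (abs_nonneg _) _
    have hm := mul_le_mul_of_nonneg_right hθbound.le hvq
    simp only [hCdef]
    linarith
  set Iv : ℕ → ℝ := fun k => ∫ x, |f k x - g x| ^ q ∂μ with hIv
  set If : ℕ → ℝ := fun k => ∫ x, |f k x| ^ q ∂μ with hIf
  set Ig : ℝ := ∫ x, |g x| ^ q ∂μ with hIg
  have hIvA : ∀ k, Iv k ≤ A := hA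
  have hIvnn : ∀ k, 0 ≤ Iv k := fun k => integral_nonneg fun x => Real.rpow_nonneg (abs_nonneg _) _
  have hIgnn : 0 ≤ Ig := integral_nonneg fun x => Real.rpow_nonneg (abs_nonneg _) _
  -- define G_k ≥ 0
  set G : ℕ → α → ℝ := fun k x => C * |g x| ^ q - (|f k x| ^ q - (1 + δ) * |f k x - g x| ^ q)
    with hG
  have hGnn : ∀ k x, 0 ≤ G k x := by
    intro k x
    have := hkey k x
    simp only [hG]
    linarith
  have hGint : ∀ k, Integrable (G k) μ := by
    intro k
    have h1 : Integrable (fun x => C * |g x| ^ q) μ := hgi.const_mul _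
    have h2 : Integrable (fun x => (1 + δ) * |f k x - g x| ^ q) μ := (hvi k).const_mul _
    exact (h1.sub ((hfi k).sub h2))
  have hGval : ∀ k, ∫ x, G k x ∂μ = C * Ig - (If k - (1 + δ) * Iv k) := by
    intro k
    have h1 : Integrable (fun x => C * |g x| ^ q) μ := hgi.const_mul _
    have h2 : Integrable (fun x => (1 + δ) * |f k x - g x| ^ q) μ := (hvi k).const_mul _
    have h3 : Integrable (fun x => |f k x| ^ q - (1 + δ) * |f k x - g x| ^ q) μ := by
      exact (hfi k).sub h2
    show ∫ x, C * |g x| ^ q - (|f k x| ^ q - (1 + δ) * |f k x - g x| ^ q) ∂μ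
        = C * Ig - (If k - (1 + δ) * Iv k)
    rw [integral_sub h1 h3, integral_sub (hfi k) h2, integral_const_mul, integral_const_mul]
  -- a.e. limit of G
  have hGlim : ∀ᵐ x ∂μ, Tendsto (fun k => G k x) atTop (𝓝 ((C - 1) * |g x| ^ q)) := by
    filter_upwards [hae] with x hx
    have hcq : Continuous (fun t : ℝ => |t| ^ q) :=
      (Real.continuous_rpow_const hq0.le).comp continuous_abs
    have l1 : Tendsto (fun k => |f k x| ^ q) atTop (𝓝 (|g x| ^ q)) :=
      (hcq.tendsto _).comp hx
    have l2 : Tendsto (fun k => |f k x - g x| ^ q) atTop (𝓝 0) := by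
      have hx0 : Tendsto (fun k => f k x - g x) atTop (𝓝 (g x - g x)) :=
        hx.sub tendsto_const_nhds
      rw [sub_self] at hx0
      have := (hcq.tendsto 0).comp hx0
      simpa [Function.comp_def, Real.zero_rpow (ne_of_gt hq0)] using this
    have : Tendsto (fun k => C * |g x| ^ q - (|f k x| ^ q - (1 + δ) * |f k x - g x| ^ q))
        atTop (𝓝 (C * |g x| ^ q - (|g x| ^ q - (1 + δ) * 0))) :=
      (tendsto_const_nhds.sub (l1.sub (l2.const_mul _)))
    refine this.congr' ?_ |>.mono_right (le_of_eq ?_)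
    · rfl
    · congr 1; ring
  -- Fatou
  have hFatou : ENNReal.ofReal ((C - 1) * Ig)
      ≤ liminf (fun k => ENNReal.ofReal (∫ x, G k x ∂μ)) atTop := by
    have hmeasG : ∀ k, Measurable (G k) := by
      intro k
      have hq' : Measurable fun t : ℝ => |t| ^ q :=
        ((Real.continuous_rpow_const hq0.le).comp continuous_abs).measurable
      exact (measurable_const.mul (hq'.comp hgm)).sub
        ((hq'.comp (hfm k)).sub (measurable_const.mul (hq'.comp ((hfm k).sub hgm))))
    have h1 : ∫⁻ x, ENNReal.ofReal ((C - 1) * |g x| ^ q) ∂μ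
        ≤ liminf (fun k => ∫⁻ x, ENNReal.ofReal (G k x) ∂μ) atTop := by
      have := lintegral_liminf_le' (μ := μ)
        (f := fun k x => ENNReal.ofReal (G k x)) (u := atTop)
        (fun k => (ENNReal.measurable_ofReal.comp (hmeasG k)).aemeasurable)
      refine le_trans (le_of_eq ?_) this
      apply lintegral_congr_ae
      filter_upwards [hGlim] with x hx
      exact (Tendsto.liminf_eq (ENNReal.tendsto_ofReal hx)).symm
    have h2 : ∫⁻ x, ENNReal.ofReal ((C - 1) * |g x| ^ q) ∂μ
        = ENNReal.ofReal ((C - 1) * Ig) := by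
      rw [← MeasureTheory.ofReal_integral_eq_lintegral_ofReal (hgi.const_mul (C - 1))
        (Eventually.of_forall fun x =>
          mul_nonneg (by linarith) (Real.rpow_nonneg (abs_nonneg _) _)), integral_const_mul]
    have h3 : ∀ k, ∫⁻ x, ENNReal.ofReal (G k x) ∂μ = ENNReal.ofReal (∫ x, G k x ∂μ) := by
      intro k
      rw [← MeasureTheory.ofReal_integral_eq_lintegral_ofReal (hGint k)
        (Eventually.of_forall (hGnn k))]
    rw [← h2]
    refine le_trans h1 (le_of_eq ?_)
    apply liminf_congr
    filter_upwards with k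
    exact h3 k
  -- conclude
  have hmain : ∀ᶠ k in atTop, (C - 1) * Ig - ε / 2 < ∫ x, G k x ∂μ := by
    by_cases hcase : (C - 1) * Ig - ε / 2 < 0
    · filter_upwards with k
      exact lt_of_lt_of_le hcase (integral_nonneg (hGnn k))
    · push_neg at hcase
      have hXpos : 0 < (C - 1) * Ig := by
        rcases lt_or_ge 0 ((C - 1) * Ig) with h | h
        · exact h
        · linarith
      have hlt : ENNReal.ofReal ((C - 1) * Ig - ε / 2) < ENNReal.ofReal ((C - 1) * Ig) :=
        ENNReal.ofReal_lt_ofReal_iff hXpos |>.2 (by linarith)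
      have := eventually_lt_of_lt_liminf (lt_of_lt_of_le hlt hFatou)
      filter_upwards [this] with k hk
      exact (ENNReal.ofReal_lt_ofReal_iff_of_nonneg hcase).1 hk
  filter_upwards [hmain] with k hk
  rw [hGval k] at hk
  have h1 : If k - (1 + δ) * Iv k < Ig + ε / 2 := by linarith
  have h2 : δ * Iv k ≤ δ * A := mul_le_mul_of_nonneg_left (hIvA k) hδ0.le
  show If k - Iv k - Ig ≤ ε
  nlinarith [hIvnn k]

end Aux


/-- **Key estimate in Lemma 3.2** (inequality (3.5) of the paper):
for a bounded sequence `u_j ⇀ u_∞` in `X₀`,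
`liminf (Ê_μ(u_j) − Ê_μ(u_∞)) ≥ liminf (1/2 − (c^{2*} μ/2*) ‖u_j−u_∞‖^{2*−2}) ‖u_j−u_∞‖²`. -/
theorem statement6
    (n : ℕ) (s : ℝ) (hs : s ∈ Set.Ioo (0:ℝ) 1) (hn : 2 * s < n)
    (Ω : Set (EV n)) (hΩo : IsOpen Ω) (hΩne : Ω.Nonempty) (hΩb : Bornology.IsBounded Ω)
    (K : EV n → ℝ)
    (hKpos : ∀ x : EV n, x ≠ 0 → 0 < K x)
    (hK1 : Integrable (fun x : EV n => min (‖x‖ ^ 2) 1 * K x))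
    (hK2 : ∃ k₀ > 0, ∀ x : EV n, x ≠ 0 → k₀ * ‖x‖ ^ (-((n : ℝ) + 2 * s)) ≤ K x)
    (c : ℝ) (hc : 0 < c)
    (hclub : IsLUB {ρ : ℝ | ∃ u, MemX0 K Ω u ∧
        ¬ (∀ᵐ x ∂(volume : Measure (EV n)), u x = 0) ∧
        ρ = lpNorm Ω (twoStar n s) u / gNorm K u} c)
    (hcpt : ∀ (uj : ℕ → EV n → ℝ) (u : EV n → ℝ), (∀ j, MemX0 K Ω (uj j)) →
        MemX0 K Ω u → WeakConv K Ω uj u → ∀ p : ℝ, 1 ≤ p → p < twoStar n s →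
        Tendsto (fun j => lpNorm Ω p (fun x => uj j x - u x)) atTop (𝓝 0))
    (μ : ℝ) (hμ : 0 < μ)
    (uj : ℕ → EV n → ℝ) (uinf : EV n → ℝ)
    (hujX : ∀ j, MemX0 K Ω (uj j))
    (hbdd : ∃ M : ℝ, ∀ j, gNorm K (uj j) ≤ M)
    (huinfX : MemX0 K Ω uinf)
    (hweak : WeakConv K Ω uj uinf) :
    liminf (fun j =>
        (1 / 2 - c ^ twoStar n s * μ / twoStar n s *
            gNorm K (fun x => uj j x - uinf x) ^ (twoStar n s - 2)) *
          gNorm K (fun x => uj j x - uinf x) ^ 2) atTop ≤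
      liminf (fun j => energyHat s K Ω μ (uj j) - energyHat s K Ω μ uinf) atTop := by
  classical
  obtain ⟨M, hM⟩ := hbdd
  -- basic numerics
  have hs0 : 0 < s := hs.1
  have hn0 : (0:ℝ) < n := by linarith
  have hn1 : 1 ≤ n := by exact_mod_cast Nat.one_le_iff_ne_zero.2 (by
    intro h; rw [h] at hn0; norm_num at hn0)
  have hns : (0:ℝ) < (n:ℝ) - 2 * s := by linarith
  set q : ℝ := twoStar n s with hqdef
  have hq2 : 2 < q := by
    rw [hqdef, twoStar, lt_div_iff₀ hns]
    linarith
  have hq1 : 1 < q := by linarith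
  have hq0 : (0:ℝ) < q := by linarith
  haveI : Nonempty (Fin n) := ⟨⟨0, hn1⟩⟩
  haveI : Nontrivial (EV n) := inferInstance
  obtain ⟨K', hK'm, hK'ae⟩ := Aux.exists_Kmeas hKpos hK1
  haveI : IsFiniteMeasure ((volume : Measure (EV n)).restrict Ω) :=
    ⟨by rw [Measure.restrict_apply_univ]; exact hΩb.measure_lt_top⟩
  -- the difference sequence
  set v : ℕ → EV n → ℝ := fun j => fun x => uj j x - uinf x with hvdef
  have hvX : ∀ j, MemX0 K Ω (v j) := fun j =>
    Aux.memX0_sub hKpos hK'm hK'ae (hujX j) huinfX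
  have hiuj : ∀ j, Integrable (Aux.J K (uj j) (uj j)) := fun j =>
    (Aux.fin_iff _).1 (hujX j).fin
  have hiinf : Integrable (Aux.J K uinf uinf) := (Aux.fin_iff _).1 huinfX.fin
  have hiv : ∀ j, Integrable (Aux.J K (v j) (v j)) := fun j =>
    (Aux.fin_iff _).1 (hvX j).fin
  have hicross : ∀ j, Integrable (Aux.J K (uj j) uinf) := fun j =>
    Aux.J_cross_integrable hKpos hK'm hK'ae (hujX j).meas huinfX.meas (hiuj j) hiinf
  -- cross term tends to zero
  set e : ℕ → ℝ := fun j => gInner K (v j) uinf with hedef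
  have he : Tendsto e atTop (𝓝 0) := by
    have h1 : ∀ j, e j = gInner K (uj j) uinf - gInner K uinf uinf := fun j =>
      Aux.gInner_sub_left (hicross j) hiinf
    have h2 := (hweak uinf huinfX).sub_const (gInner K uinf uinf)
    rw [sub_self] at h2
    exact h2.congr fun j => (h1 j).symm
  -- norm expansion
  have hexp : ∀ j, gNorm K (uj j) ^ 2 = gNorm K (v j) ^ 2 + 2 * e j + gNorm K uinf ^ 2 := by
    intro j
    have hiden : (fun x => v j x + 1 * uinf x) = uj j := by
      funext x; simp [hvdef]
    have := Aux.gInner_expand hKpos hK'm hK'ae (hvX j).meas huinfX.meas (hiv j) hiinf 1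
    rw [hiden] at this
    rw [Aux.gNorm_sq hKpos, Aux.gNorm_sq hKpos, Aux.gNorm_sq hKpos, this, hedef]
    ring
  -- Sobolev facts
  have sobuj : ∀ j, IntegrableOn (fun x => |uj j x| ^ q) Ω volume ∧
      ∫ x in Ω, |uj j x| ^ q ≤ c ^ q * gNorm K (uj j) ^ q := fun j =>
    Aux.sobolev hc hKpos hK'm hK'ae hK2 hΩb hclub hq0 (hujX j)
  have sobv : ∀ j, IntegrableOn (fun x => |v j x| ^ q) Ω volume ∧
      ∫ x in Ω, |v j x| ^ q ≤ c ^ q * gNorm K (v j) ^ q := fun j =>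
    Aux.sobolev hc hKpos hK'm hK'ae hK2 hΩb hclub hq0 (hvX j)
  have sobinf : IntegrableOn (fun x => |uinf x| ^ q) Ω volume ∧
      ∫ x in Ω, |uinf x| ^ q ≤ c ^ q * gNorm K uinf ^ q :=
    Aux.sobolev hc hKpos hK'm hK'ae hK2 hΩb hclub hq0 huinfX
  -- uniform bounds
  have hM0 : 0 ≤ M := le_trans (Aux.gNorm_nonneg _) (hM 0)
  set M₂ : ℝ := M + gNorm K uinf with hM₂def
  have hM₂0 : 0 ≤ M₂ := add_nonneg hM0 (Aux.gNorm_nonneg _)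
  have hvle : ∀ j, gNorm K (v j) ≤ M₂ := by
    intro j
    refine le_trans (Aux.gNorm_sub_le hKpos hK'm hK'ae (hujX j).meas huinfX.meas
      (hiuj j) hiinf) ?_
    rw [hM₂def]; linarith [hM j]
  -- S-claim: Brezis-Lieb along the full sequence
  have hμq : 0 < μ / q := div_pos hμ hq0
  have hS : ∀ δ : ℝ, 0 < δ → ∀ᶠ j in atTop,
      (∫ x in Ω, |uj j x| ^ q) - (∫ x in Ω, |v j x| ^ q) - (∫ x in Ω, |uinf x| ^ q) ≤ δ := by
    intro δ hδ
    by_contra hcon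
    rw [Filter.not_eventually] at hcon
    have hfreq : ∃ᶠ j in atTop, δ <
        (∫ x in Ω, |uj j x| ^ q) - (∫ x in Ω, |v j x| ^ q) - (∫ x in Ω, |uinf x| ^ q) :=
      hcon.mono fun j h => lt_of_not_ge h
    obtain ⟨φ, hφmono, hφ⟩ := extraction_of_frequently_atTop hfreq
    have hL1 := hcpt uj uinf hujX huinfX hweak 1 le_rfl hq1
    have hL1' : Tendsto (fun j => ∫ x in Ω, |v j x|) atTop (𝓝 0) := by
      refine hL1.congr fun j => ?_
      simp [_root_.lpNorm, Real.rpow_one, hvdef]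
    have hI1φ : Tendsto (fun k => ∫ x in Ω, |v (φ k) x|) atTop (𝓝 0) :=
      hL1'.comp hφmono.tendsto_atTop
    have hint1 : ∀ j, Integrable (v j) (volume.restrict Ω) := by
      intro j
      refine Integrable.mono' ((integrable_const 1).add ((sobv j).1))
        ((hvX j).meas.aestronglyMeasurable.restrict) ?_
      filter_upwards with x
      rw [Real.norm_eq_abs]
      show |v j x| ≤ 1 + |v j x| ^ q
      rcases le_total (|v j x|) 1 with h | h
      · have h0 : (0:ℝ) ≤ |v j x| ^ q := Real.rpow_nonneg (abs_nonneg _) _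
        linarith
      · have h2 : |v j x| ^ (1:ℝ) ≤ |v j x| ^ q := Real.rpow_le_rpow_of_exponent_le h hq1.le
        rw [Real.rpow_one] at h2
        linarith
    have hel : Tendsto (fun k => eLpNorm (v (φ k)) 1 (volume.restrict Ω)) atTop (𝓝 0) := by
      have heq : ∀ k, eLpNorm (v (φ k)) 1 (volume.restrict Ω)
          = ENNReal.ofReal (∫ x in Ω, |v (φ k) x|) := by
        intro k
        rw [eLpNorm_one_eq_lintegral_enorm,
          MeasureTheory.ofReal_integral_eq_lintegral_ofReal (hint1 (φ k)).abs
            (Eventually.of_forall fun x => abs_nonneg _)]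
        apply lintegral_congr
        intro x
        rw [← Real.enorm_eq_ofReal (abs_nonneg _)]
        simp
      have := ENNReal.tendsto_ofReal hI1φ
      rw [ENNReal.ofReal_zero] at this
      exact this.congr fun k => (heq k).symm
    have htm : TendstoInMeasure (volume.restrict Ω) (fun k => v (φ k)) atTop 0 := by
      refine tendstoInMeasure_of_tendsto_eLpNorm (p := 1) one_ne_zero
        (fun k => (hvX (φ k)).meas.aestronglyMeasurable.restrict)
        aestronglyMeasurable_zero ?_
      refine hel.congr fun k => ?_
      congr 1
      funext x
      simp
    obtain ⟨ψ, hψmono, haevk⟩ := htm.exists_seq_tendsto_ae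
    have haeuj : ∀ᵐ x ∂(volume.restrict Ω),
        Tendsto (fun k => uj (φ (ψ k)) x) atTop (𝓝 (uinf x)) := by
      filter_upwards [haevk] with x hx
      have hx' : Tendsto (fun k => v (φ (ψ k)) x) atTop (𝓝 0) := by
        simpa using hx
      have h2 := hx'.add (tendsto_const_nhds (x := uinf x))
      rw [zero_add] at h2
      refine h2.congr fun k => ?_
      show v (φ (ψ k)) x + uinf x = uj (φ (ψ k)) x
      simp [hvdef]
    have hAbd : ∀ k, ∫ x in Ω, |uj (φ (ψ k)) x - uinf x| ^ q ≤ c ^ q * M₂ ^ q := by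
      intro k
      refine le_trans (sobv (φ (ψ k))).2 ?_
      exact mul_le_mul_of_nonneg_left
        (Real.rpow_le_rpow (Aux.gNorm_nonneg _) (hvle _) hq0.le)
        (Real.rpow_nonneg hc.le _)
    have hbl := Aux.bl_eventually (μ := volume.restrict Ω) hq1
      (fun k => uj (φ (ψ k))) uinf (fun k => (hujX _).meas) huinfX.meas
      (fun k => (sobuj _).1) (fun k => (sobv (φ (ψ k))).1) sobinf.1
      (c ^ q * M₂ ^ q) hAbd haeuj hδ
    obtain ⟨k, hk⟩ := hbl.exists
    have := hφ (ψ k)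
    have hkk : (∫ x in Ω, |uj (φ (ψ k)) x| ^ q) - (∫ x in Ω, |v (φ (ψ k)) x| ^ q)
        - (∫ x in Ω, |uinf x| ^ q) ≤ δ := hk
    linarith
  -- the core eventual inequality
  have hgnn : ∀ j, 0 ≤ gNorm K (v j) := fun j => Aux.gNorm_nonneg _
  have hAeq : ∀ j, (1 / 2 - c ^ q * μ / q * gNorm K (v j) ^ (q - 2)) * gNorm K (v j) ^ 2
      = 1 / 2 * gNorm K (v j) ^ 2 - μ / q * (c ^ q * gNorm K (v j) ^ q) := by
    intro j
    have hval : gNorm K (v j) ^ (q - 2) * gNorm K (v j) ^ 2 = gNorm K (v j) ^ q := by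
      rcases eq_or_lt_of_le (hgnn j) with h0 | hpos
      · rw [← h0, Real.zero_rpow (by linarith : q - 2 ≠ 0),
          Real.zero_rpow (by linarith : q ≠ 0)]
        simp
      · have h2 : gNorm K (v j) ^ (2:ℕ) = gNorm K (v j) ^ ((2:ℕ):ℝ) :=
          (Real.rpow_natCast _ 2).symm
        rw [h2, ← Real.rpow_add hpos]
        norm_num
    rw [← hval]; ring
  have hcore : ∀ ε : ℝ, 0 < ε → ∀ᶠ j in atTop,
      (1 / 2 - c ^ q * μ / q * gNorm K (v j) ^ (q - 2)) * gNorm K (v j) ^ 2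
        ≤ (energyHat s K Ω μ (uj j) - energyHat s K Ω μ uinf) + ε := by
    intro ε hε
    have hee : ∀ᶠ j in atTop, |e j| < ε / 2 := by
      have h2 := Metric.tendsto_atTop.1 he (ε / 2) (by positivity)
      obtain ⟨N, hN⟩ := h2
      rw [eventually_atTop]
      exact ⟨N, fun j hj => by have := hN j hj; rwa [Real.dist_eq, sub_zero] at this⟩
    have hSe := hS ((ε / 2) * (q / μ)) (by positivity)
    filter_upwards [hee, hSe] with j hej hSj
    have hVle : ∫ x in Ω, |v j x| ^ q ≤ c ^ q * gNorm K (v j) ^ q := (sobv j).2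
    have hmul1 : μ / q * ((∫ x in Ω, |uj j x| ^ q) - (∫ x in Ω, |v j x| ^ q)
        - (∫ x in Ω, |uinf x| ^ q)) ≤ μ / q * ((ε / 2) * (q / μ)) :=
      mul_le_mul_of_nonneg_left hSj hμq.le
    have hmul2 : μ / q * ((ε / 2) * (q / μ)) = ε / 2 := by
      field_simp
    have hmul3 : μ / q * (∫ x in Ω, |v j x| ^ q) ≤ μ / q * (c ^ q * gNorm K (v j) ^ q) :=
      mul_le_mul_of_nonneg_left hVle hμq.le
    have heb : -(ε/2) ≤ e j := by
      have := neg_abs_le (e j)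
      linarith
    rw [hAeq j]
    show _ ≤ (energyHat s K Ω μ (uj j) - energyHat s K Ω μ uinf) + ε
    simp only [energyHat]
    rw [hexp j]
    have := hmul1
    linarith
  -- bounds for liminf manipulation
  set A : ℕ → ℝ := fun j =>
    (1 / 2 - c ^ q * μ / q * gNorm K (fun x => uj j x - uinf x) ^ (q - 2)) *
      gNorm K (fun x => uj j x - uinf x) ^ 2 with hAdef
  set B : ℕ → ℝ := fun j => energyHat s K Ω μ (uj j) - energyHat s K Ω μ uinf with hBdef
  have hAeq' : ∀ j, A j = 1 / 2 * gNorm K (v j) ^ 2 - μ / q * (c ^ q * gNorm K (v j) ^ q) :=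
    fun j => hAeq j
  have hAlow : ∀ j, -(μ / q * (c ^ q * M₂ ^ q)) ≤ A j := by
    intro j
    rw [hAeq' j]
    have h1 : gNorm K (v j) ^ q ≤ M₂ ^ q :=
      Real.rpow_le_rpow (hgnn j) (hvle j) hq0.le
    have h2 : (0:ℝ) ≤ c ^ q := Real.rpow_nonneg hc.le _
    have h3 : μ / q * (c ^ q * gNorm K (v j) ^ q) ≤ μ / q * (c ^ q * M₂ ^ q) :=
      mul_le_mul_of_nonneg_left (mul_le_mul_of_nonneg_left h1 h2) hμq.le
    nlinarith [sq_nonneg (gNorm K (v j))]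
  have hBup : ∀ j, B j ≤ 1 / 2 * M ^ 2 - energyHat s K Ω μ uinf := by
    intro j
    have h1 : gNorm K (uj j) ^ 2 ≤ M ^ 2 := by
      have := Aux.gNorm_nonneg (K := K) (uj j)
      nlinarith [hM j]
    have h2 : (0:ℝ) ≤ ∫ x in Ω, |uj j x| ^ q :=
      integral_nonneg fun x => Real.rpow_nonneg (abs_nonneg _) _
    have h3 : energyHat s K Ω μ (uj j) ≤ 1 / 2 * M ^ 2 := by
      simp only [energyHat]
      have h4 : 0 ≤ μ / q * ∫ x in Ω, |uj j x| ^ q := mul_nonneg hμq.le h2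
      show 1 / 2 * gNorm K (uj j) ^ 2 - μ / q * (∫ x in Ω, |uj j x| ^ q) ≤ 1 / 2 * M ^ 2
      linarith
    simp only [hBdef]
    linarith
  have hAbdd : IsBoundedUnder (· ≥ ·) atTop A :=
    isBoundedUnder_of ⟨-(μ / q * (c ^ q * M₂ ^ q)), fun j => hAlow j⟩
  have hBcob : IsCoboundedUnder (· ≥ ·) atTop B :=
    (isBoundedUnder_of ⟨1 / 2 * M ^ 2 - energyHat s K Ω μ uinf,
      fun j => hBup j⟩ : IsBoundedUnder (· ≤ ·) atTop B).isCoboundedUnder_ge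
  have key : ∀ b : ℝ, b < liminf A atTop → b ≤ liminf B atTop := by
    intro b hb
    have hε : 0 < (liminf A atTop - b) / 2 := by linarith
    have h1 : ∀ᶠ j in atTop, b + (liminf A atTop - b) / 2 < A j :=
      eventually_lt_of_lt_liminf (by linarith) hAbdd
    have h2 := hcore ((liminf A atTop - b) / 2) hε
    have h3 : ∀ᶠ j in atTop, b ≤ B j := by
      filter_upwards [h1, h2] with j hj1 hj2
      have hj1' : b + (liminf A atTop - b) / 2
          < (1 / 2 - c ^ q * μ / q * gNorm K (v j) ^ (q - 2)) * gNorm K (v j) ^ 2 := hj1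
      show b ≤ energyHat s K Ω μ (uj j) - energyHat s K Ω μ uinf
      linarith
    exact le_liminf_of_le hBcob h3
  show liminf A atTop ≤ liminf B atTop
  by_contra hcontra
  push_neg at hcontra
  have := key ((liminf A atTop + liminf B atTop) / 2) (by linarith)
  linarith
end
end

section
/- Let λ,μ > 0 and let g : ℝ → ℝ be continuous satisfying (g1) with constants a₁,a₂ > 0 and q ∈ [1,2*). Define Ẽ_{λ,μ}(u) := (μ/2*)∫_Ω |u|^{2*} dx + λ∫_Ω G(u) dx, and for ρ > 0 and ε ∈ (0,ρ) set φ(ε,ρ) := ( sup_{B_c(0,ρ)} Ẽ_{λ,μ} − sup_{B_c(0,ρ−ε)} Ẽ_{λ,μ} ) / ε. Then limsup_{ε→0⁺} φ(ε,ρ) ≤ c_{2*}^{2*} μ ρ^{2*−1} + λ a₁ c_{2*} |Ω|^{(2*−1)/2*} + λ a₂ c_{2*}^{q} |Ω|^{(2*−q)/2*} ρ^{q−1}. -/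
open MeasureTheory Filter Topology Set

noncomputable section

open scoped ENNReal NNReal



lemma trunc_abs {M : ℝ} (hM : 0 ≤ M) (a : ℝ) : |max (min a M) (-M)| = min |a| M := by
  rcases le_total 0 a with h | h
  · have h1 : -M ≤ min a M := le_min (le_trans (neg_nonpos.mpr hM) h) (neg_le_self hM)
    rw [max_eq_left h1, abs_of_nonneg (le_min h hM), abs_of_nonneg h]
  · rw [min_eq_left (le_trans h hM), abs_of_nonpos h]
    rcases le_total a (-M) with h2 | h2
    · rw [max_eq_right h2, abs_of_nonpos (neg_nonpos.mpr hM), min_eq_right (by linarith),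
        neg_neg]
    · rw [max_eq_left h2, abs_of_nonpos h, min_eq_left (by linarith)]

lemma trunc_lip (M a b : ℝ) : |max (min a M) (-M) - max (min b M) (-M)| ≤ |a - b| := by
  refine le_trans (abs_max_sub_max_le_abs _ _ _) ?_
  have := abs_min_sub_min_le_max a M b M
  simpa using this

lemma rpow_sub_one_mul {x q : ℝ} (hx : 0 ≤ x) (hq : 1 ≤ q) : x ^ (q - 1) * x = x ^ q := by
  rcases eq_or_lt_of_le hx with h | h
  · rw [← h, mul_zero]
    rw [Real.zero_rpow (by linarith : q ≠ 0)]
  · nth_rewrite 2 [← Real.rpow_one x]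
    rw [← Real.rpow_add h]; ring_nf


lemma K_aemeas {n : ℕ} (hn : 0 < n) {K : EV n → ℝ}
    (hK1 : Integrable (fun x : EV n => min (‖x‖ ^ 2) 1 * K x)) :
    AEMeasurable K (volume : Measure (EV n)) := by
  haveI : NeZero n := ⟨hn.ne'⟩
  have hm : Measurable (fun x : EV n => (min (‖x‖ ^ 2) 1)⁻¹) :=
    ((measurable_norm.pow measurable_const).min measurable_const).inv
  have h0 : (volume : Measure (EV n)) {0} = 0 := measure_singleton 0
  have hae : ∀ᵐ x ∂(volume : Measure (EV n)), x ≠ 0 := by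
    rw [MeasureTheory.ae_iff]
    simpa using h0
  refine AEMeasurable.congr (hK1.aemeasurable.mul hm.aemeasurable) ?_
  filter_upwards [hae] with x hx
  have hpos : 0 < min (‖x‖ ^ 2) 1 := lt_min (pow_pos (norm_pos_iff.mpr hx) 2) one_pos
  show min (‖x‖ ^ 2) 1 * K x * (min (‖x‖ ^ 2) 1)⁻¹ = K x
  field_simp

-- quasi measure preserving sub composition: K ∘ (p.1 - p.2) aemeasurable on product
lemma K_sub_aemeas {n : ℕ} (hn : 0 < n) {K : EV n → ℝ}
    (hK1 : Integrable (fun x : EV n => min (‖x‖ ^ 2) 1 * K x)) :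
    AEMeasurable (fun p : EV n × EV n => K (p.1 - p.2)) (volume : Measure (EV n × EV n)) := by
  have h := MeasureTheory.quasiMeasurePreserving_sub (volume : Measure (EV n)) volume
  rw [MeasureTheory.Measure.volume_eq_prod ..]
  exact (K_aemeas hn hK1).comp_quasiMeasurePreserving h

section Aux
variable {n : ℕ} {K : EV n → ℝ} {Ω : Set (EV n)}

lemma gInner_self_eq (u : EV n → ℝ) :
    gInner K u u = ∫ p : EV n × EV n, (u p.1 - u p.2) ^ 2 * K (p.1 - p.2) := by
  unfold gInner; congr 1; funext p; ring

lemma integrand_nonneg (hKpos : ∀ x : EV n, x ≠ 0 → 0 < K x) (u : EV n → ℝ)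
    (p : EV n × EV n) : 0 ≤ (u p.1 - u p.2) ^ 2 * K (p.1 - p.2) := by
  rcases eq_or_ne p.1 p.2 with h | h
  · simp [h]
  · exact mul_nonneg (sq_nonneg _) (hKpos _ (sub_ne_zero.mpr h)).le

lemma gInner_self_nonneg (hKpos : ∀ x : EV n, x ≠ 0 → 0 < K x) (u : EV n → ℝ) :
    0 ≤ gInner K u u := by
  rw [gInner_self_eq]
  exact integral_nonneg (integrand_nonneg hKpos u)

lemma gNorm_nonneg (u : EV n → ℝ) : 0 ≤ gNorm K u := Real.sqrt_nonneg _

lemma gNorm_sq (hKpos : ∀ x : EV n, x ≠ 0 → 0 < K x) (u : EV n → ℝ) :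
    gNorm K u ^ 2 = gInner K u u := Real.sq_sqrt (gInner_self_nonneg hKpos u)

/-- comparison: if `|u' x - u' y| ≤ |u x - u y|` pointwise then the Gagliardo energies
compare, provided the big one is integrable and the small one is a.e. measurable. -/
lemma gInner_mono (hKpos : ∀ x : EV n, x ≠ 0 → 0 < K x) {u u' : EV n → ℝ}
    (hu : Integrable (fun p : EV n × EV n => (u p.1 - u p.2) ^ 2 * K (p.1 - p.2)))
    (hm' : AEStronglyMeasurable
      (fun p : EV n × EV n => (u' p.1 - u' p.2) ^ 2 * K (p.1 - p.2)) volume)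
    (hlip : ∀ x y, |u' x - u' y| ≤ |u x - u y|) :
    Integrable (fun p : EV n × EV n => (u' p.1 - u' p.2) ^ 2 * K (p.1 - p.2)) ∧
      gInner K u' u' ≤ gInner K u u := by
  have hpt : ∀ p : EV n × EV n,
      (u' p.1 - u' p.2) ^ 2 * K (p.1 - p.2) ≤ (u p.1 - u p.2) ^ 2 * K (p.1 - p.2) := by
    intro p
    rcases eq_or_ne p.1 p.2 with h | h
    · simp [h]
    · have hK := (hKpos _ (sub_ne_zero.mpr h)).le
      apply mul_le_mul_of_nonneg_right _ hK
      rw [← sq_abs (u' p.1 - u' p.2), ← sq_abs (u p.1 - u p.2)]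
      exact pow_le_pow_left₀ (abs_nonneg _) (hlip p.1 p.2) 2
  have hint' : Integrable (fun p : EV n × EV n => (u' p.1 - u' p.2) ^ 2 * K (p.1 - p.2)) := by
    refine hu.mono' hm' ?_
    filter_upwards with p
    rw [Real.norm_eq_abs, abs_of_nonneg (integrand_nonneg hKpos u' p)]
    exact hpt p
  refine ⟨hint', ?_⟩
  rw [gInner_self_eq, gInner_self_eq]
  exact integral_mono hint' hu hpt

lemma gNorm_mono (hKpos : ∀ x : EV n, x ≠ 0 → 0 < K x) {u u' : EV n → ℝ}
    (h : gInner K u' u' ≤ gInner K u u) : gNorm K u' ≤ gNorm K u :=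
  Real.sqrt_le_sqrt h

end Aux

section Zero
variable {n : ℕ} {K : EV n → ℝ} {Ω : Set (EV n)}

lemma diag_null (hn : 0 < n) :
    (volume : Measure (EV n × EV n)) {p : EV n × EV n | p.1 = p.2} = 0 := by
  haveI : NeZero n := ⟨hn.ne'⟩
  have h := MeasureTheory.quasiMeasurePreserving_sub (volume : Measure (EV n)) volume
  have h0 : (volume : Measure (EV n)) {0} = 0 := measure_singleton 0
  have : {p : EV n × EV n | p.1 = p.2} = (fun p : EV n × EV n => p.1 - p.2) ⁻¹' {0} := by
    ext p; simp [sub_eq_zero]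
  rw [this, MeasureTheory.Measure.volume_eq_prod ..]
  exact h.preimage_null h0

lemma omega_compl_not_null (hn : 0 < n) (hΩb : Bornology.IsBounded Ω) :
    (volume : Measure (EV n)) Ωᶜ ≠ 0 := by
  haveI : NeZero n := ⟨hn.ne'⟩
  intro hc
  have huniv : (volume : Measure (EV n)) Set.univ = ⊤ :=
    MeasureTheory.measure_univ_of_isAddLeftInvariant _
  have : (volume : Measure (EV n)) Set.univ ≤ volume Ω + volume Ωᶜ := by
    rw [← Set.union_compl_self Ω]; exact measure_union_le _ _
  rw [huniv, hc, add_zero] at this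
  exact (lt_of_le_of_lt this hΩb.measure_lt_top).ne rfl

/-- If the Gagliardo norm of `u ∈ X₀` vanishes, then `u = 0` a.e. -/
lemma ae_zero_of_gNorm_eq_zero (hn : 0 < n) (hΩb : Bornology.IsBounded Ω)
    (hKpos : ∀ x : EV n, x ≠ 0 → 0 < K x) {u : EV n → ℝ} (hu : MemX0 K Ω u)
    (h0 : gNorm K u = 0) : ∀ᵐ x ∂(volume : Measure (EV n)), u x = 0 := by
  have hint : gInner K u u = 0 := by
    have h1 := gInner_self_nonneg hKpos u
    have h2 : gInner K u u ≤ 0 := Real.sqrt_eq_zero'.mp h0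
    linarith
  have hF : ∀ᵐ p ∂(volume : Measure (EV n × EV n)),
      (u p.1 - u p.2) ^ 2 * K (p.1 - p.2) = 0 := by
    rw [gInner_self_eq] at hint
    exact (integral_eq_zero_iff_of_nonneg (integrand_nonneg hKpos u) hu.fin).mp hint
  have hdiag : ∀ᵐ p ∂(volume : Measure (EV n × EV n)), p.1 ≠ p.2 := by
    rw [MeasureTheory.ae_iff]
    simpa using diag_null hn
  have heq : ∀ᵐ p ∂(volume : Measure (EV n × EV n)), u p.1 = u p.2 := by
    filter_upwards [hF, hdiag] with p h1 h2
    rcases mul_eq_zero.mp h1 with h | h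
    · have := pow_eq_zero_iff (n := 2) (by norm_num) |>.mp h
      linarith [sub_eq_zero.mp this]
    · exact absurd h (hKpos _ (sub_ne_zero.mpr h2)).ne'
  rw [MeasureTheory.Measure.volume_eq_prod ..] at heq
  have hxy : ∀ᵐ x ∂(volume : Measure (EV n)), ∀ᵐ y ∂(volume : Measure (EV n)), u x = u y :=
    MeasureTheory.Measure.ae_ae_of_ae_prod heq
  filter_upwards [hxy] with x hx
  -- the set of y with u x = u y and (y ∉ Ω → u y = 0) is conull; Ωᶜ is not null
  have hconull : ∀ᵐ y ∂(volume : Measure (EV n)), u x = u y ∧ (y ∉ Ω → u y = 0) :=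
    hx.and hu.zero
  by_contra hne
  have hsub : Ωᶜ ⊆ {y | ¬(u x = u y ∧ (y ∉ Ω → u y = 0))} := by
    intro y hy
    simp only [Set.mem_setOf_eq]
    rintro ⟨h1, h2⟩
    exact hne (h1.trans (h2 hy))
  exact omega_compl_not_null hn hΩb (measure_mono_null hsub hconull)
end Zero

section Trunc
variable {n : ℕ} {K : EV n → ℝ} {Ω : Set (EV n)}

/-- truncation at level `M` -/
def trunc (M : ℝ) (u : EV n → ℝ) : EV n → ℝ := fun x => max (min (u x) M) (-M)

lemma trunc_meas {u : EV n → ℝ} (hu : Measurable u) (M : ℝ) : Measurable (trunc M u) :=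
  (hu.min measurable_const).max measurable_const

lemma trunc_memX0 (hn : 0 < n) (hKpos : ∀ x : EV n, x ≠ 0 → 0 < K x)
    (hK1 : Integrable (fun x : EV n => min (‖x‖ ^ 2) 1 * K x))
    {u : EV n → ℝ} (hu : MemX0 K Ω u) {M : ℝ} (hM : 0 ≤ M) :
    MemX0 K Ω (trunc M u) ∧ gInner K (trunc M u) (trunc M u) ≤ gInner K u u := by
  have hmeas : Measurable (trunc M u) := trunc_meas hu.meas M
  have hsm : AEStronglyMeasurable
      (fun p : EV n × EV n => (trunc M u p.1 - trunc M u p.2) ^ 2 * K (p.1 - p.2)) volume := by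
    have h1 : Measurable (fun p : EV n × EV n => (trunc M u p.1 - trunc M u p.2) ^ 2) :=
      ((hmeas.comp measurable_fst).sub (hmeas.comp measurable_snd)).pow_const 2
    exact (h1.aemeasurable.mul (K_sub_aemeas hn hK1)).aestronglyMeasurable
  have hlip : ∀ x y, |trunc M u x - trunc M u y| ≤ |u x - u y| := fun x y => trunc_lip M _ _
  obtain ⟨hint, hle⟩ := gInner_mono hKpos hu.fin hsm hlip
  refine ⟨⟨hmeas, ?_, hint⟩, hle⟩
  filter_upwards [hu.zero] with x hx hxo
  simp [trunc, hx hxo, hM, max_eq_left, min_eq_left, neg_nonpos.mpr hM]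

lemma trunc_abs_apply {M : ℝ} (hM : 0 ≤ M) (u : EV n → ℝ) (x : EV n) :
    |trunc M u x| = min |u x| M := trunc_abs hM (u x)

lemma ennnorm_rpow_abs (a : ℝ) {p : ℝ} (hp : 0 ≤ p) :
    (‖a‖₊ : ℝ≥0∞) ^ p = ENNReal.ofReal (|a| ^ p) := by
  rw [← enorm_eq_nnnorm, Real.enorm_eq_ofReal_abs, ENNReal.ofReal_rpow_of_nonneg (abs_nonneg a) hp]

end Trunc

section Key
variable {n : ℕ} {K : EV n → ℝ} {Ω : Set (EV n)}

lemma key_lintegral (hn : 0 < n) (hΩb : Bornology.IsBounded Ω)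
    (hKpos : ∀ x : EV n, x ≠ 0 → 0 < K x)
    (hK1 : Integrable (fun x : EV n => min (‖x‖ ^ 2) 1 * K x))
    {P c : ℝ} (hP : 0 < P) (hc : 0 < c)
    (hub : ∀ r ∈ {ρ : ℝ | ∃ u, MemX0 K Ω u ∧
        ¬ (∀ᵐ x ∂(volume : Measure (EV n)), u x = 0) ∧
        ρ = lpNorm Ω P u / gNorm K u}, r ≤ c)
    {u : EV n → ℝ} (hu : MemX0 K Ω u) :
    ∫⁻ x in Ω, (‖u x‖₊ : ℝ≥0∞) ^ P ≤ ENNReal.ofReal ((c * gNorm K u) ^ P) := by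
  set B : ℝ := c * gNorm K u with hB
  have hB0 : 0 ≤ B := mul_nonneg hc.le (gNorm_nonneg u)
  -- bound for each truncation
  have Hm : ∀ m : ℕ, ∫⁻ x in Ω, (‖trunc (m + 1 : ℝ) u x‖₊ : ℝ≥0∞) ^ P
      ≤ ENNReal.ofReal (B ^ P) := by
    intro m
    set M : ℝ := (m : ℝ) + 1 with hMdef
    have hM0 : (0:ℝ) ≤ M := by positivity
    obtain ⟨hmem, hle⟩ := trunc_memX0 hn hKpos hK1 hu (M := M) hM0
    set v : EV n → ℝ := trunc M u with hv
    by_cases hz : ∀ᵐ x ∂(volume : Measure (EV n)), v x = 0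
    · have : ∫⁻ x in Ω, (‖v x‖₊ : ℝ≥0∞) ^ P = 0 := by
        have hz' : ∀ᵐ x ∂((volume : Measure (EV n)).restrict Ω),
            (fun y => ((‖v y‖₊ : ℝ≥0∞) ^ P)) x = 0 := by
          filter_upwards [ae_restrict_of_ae hz] with x hx
          simp [hx, ENNReal.zero_rpow_of_pos hP]
        rw [lintegral_congr_ae hz', lintegral_zero]
      simp [this]
    · -- v is not a.e. zero, so its gNorm is positive and hub applies
      have hgpos : 0 < gNorm K v := by
        rcases lt_or_eq_of_le (gNorm_nonneg (K := K) v) with h | h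
        · exact h
        · exact absurd (ae_zero_of_gNorm_eq_zero hn hΩb hKpos hmem h.symm) hz
      have hmemS : lpNorm Ω P v / gNorm K v ≤ c :=
        hub _ ⟨v, hmem, hz, rfl⟩
      have hlp : lpNorm Ω P v ≤ B := by
        have h1 : lpNorm Ω P v ≤ c * gNorm K v := (div_le_iff₀ hgpos).mp hmemS
        have h2 : gNorm K v ≤ gNorm K u := gNorm_mono hKpos hle
        calc lpNorm Ω P v ≤ c * gNorm K v := h1
        _ ≤ B := by rw [hB]; exact mul_le_mul_of_nonneg_left h2 hc.le
      -- |v| ≤ M so |v|^P is integrable on Ω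
      have habs : ∀ x, |v x| ≤ M := fun x => by
        rw [hv, trunc_abs_apply hM0]; exact min_le_right _ _
      have hvmeas : Measurable v := trunc_meas hu.meas M
      have hintP : IntegrableOn (fun x => |v x| ^ P) Ω := by
        refine Integrable.mono' (g := fun _ => M ^ P)
          (integrableOn_const hΩb.measure_lt_top.ne) ?_ ?_
        · exact (hvmeas.abs.pow_const P).aestronglyMeasurable
        · filter_upwards with x
          rw [Real.norm_eq_abs, abs_of_nonneg (Real.rpow_nonneg (abs_nonneg _) P)]
          exact Real.rpow_le_rpow (abs_nonneg _) (habs x) hP.le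
      have hII : (0:ℝ) ≤ ∫ x in Ω, |v x| ^ P :=
        integral_nonneg fun x => Real.rpow_nonneg (abs_nonneg _) P
      have hIle : ∫ x in Ω, |v x| ^ P ≤ B ^ P := by
        have : ((∫ x in Ω, |v x| ^ P) ^ (1 / P)) ^ P ≤ B ^ P :=
          Real.rpow_le_rpow (Real.rpow_nonneg hII _) hlp hP.le
        rwa [← Real.rpow_mul hII, one_div, inv_mul_cancel₀ hP.ne', Real.rpow_one] at this
      calc ∫⁻ x in Ω, (‖v x‖₊ : ℝ≥0∞) ^ P
          = ∫⁻ x in Ω, ENNReal.ofReal (|v x| ^ P) := by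
            apply lintegral_congr_ae
            filter_upwards with x
            exact ennnorm_rpow_abs (v x) hP.le
        _ = ENNReal.ofReal (∫ x in Ω, |v x| ^ P) := by
            rw [← MeasureTheory.ofReal_integral_eq_lintegral_ofReal hintP ?_]
            filter_upwards with x using Real.rpow_nonneg (abs_nonneg _) P
        _ ≤ ENNReal.ofReal (B ^ P) := ENNReal.ofReal_le_ofReal hIle
  -- monotone convergence
  have hmono : Monotone (fun m : ℕ => fun x => (‖trunc ((m:ℝ) + 1) u x‖₊ : ℝ≥0∞) ^ P) := by
    intro a b hab x
    apply ENNReal.rpow_le_rpow _ hP.le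
    have hc' : ((a:ℝ) + 1) ≤ (b:ℝ) + 1 := by
      have := (Nat.cast_le (α := ℝ)).mpr hab; linarith
    have h1 : |trunc ((a:ℝ)+1) u x| ≤ |trunc ((b:ℝ)+1) u x| := by
      rw [trunc_abs_apply (by positivity), trunc_abs_apply (by positivity)]
      exact min_le_min le_rfl hc'
    rw [ENNReal.coe_le_coe]
    rwa [← Real.norm_eq_abs, ← Real.norm_eq_abs, ← coe_nnnorm, ← coe_nnnorm,
      NNReal.coe_le_coe] at h1
  -- pointwise supremum
  have hsup : ∀ x, (⨆ m : ℕ, (‖trunc ((m:ℝ) + 1) u x‖₊ : ℝ≥0∞) ^ P)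
      = (‖u x‖₊ : ℝ≥0∞) ^ P := by
    intro x
    apply le_antisymm
    · apply iSup_le
      intro m
      apply ENNReal.rpow_le_rpow _ hP.le
      have h1 : |trunc ((m:ℝ)+1) u x| ≤ |u x| := by
        rw [trunc_abs_apply (by positivity)]; exact min_le_left _ _
      rw [ENNReal.coe_le_coe]
      rwa [← Real.norm_eq_abs, ← Real.norm_eq_abs, ← coe_nnnorm, ← coe_nnnorm,
        NNReal.coe_le_coe] at h1
    · obtain ⟨m, hm⟩ := exists_nat_ge |u x|
      have h1 : |trunc ((m:ℝ)+1) u x| = |u x| := by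
        rw [trunc_abs_apply (by positivity)]
        exact min_eq_left (by linarith)
      have h2 : (‖trunc ((m:ℝ)+1) u x‖₊ : ℝ≥0∞) = (‖u x‖₊ : ℝ≥0∞) := by
        congr 1
        ext
        rw [coe_nnnorm, coe_nnnorm, Real.norm_eq_abs, Real.norm_eq_abs, h1]
      exact le_iSup_of_le m (by rw [h2])
  have hmeas : ∀ m : ℕ, Measurable (fun x => (‖trunc ((m:ℝ) + 1) u x‖₊ : ℝ≥0∞) ^ P) := by
    intro m
    exact ((trunc_meas hu.meas _).nnnorm.coe_nnreal_ennreal).pow_const P |>.comp measurable_id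
      |>.mono le_rfl le_rfl
  calc ∫⁻ x in Ω, (‖u x‖₊ : ℝ≥0∞) ^ P
      = ∫⁻ x in Ω, ⨆ m : ℕ, (‖trunc ((m:ℝ) + 1) u x‖₊ : ℝ≥0∞) ^ P := by
        apply lintegral_congr_ae
        filter_upwards with x using (hsup x).symm
    _ = ⨆ m : ℕ, ∫⁻ x in Ω, (‖trunc ((m:ℝ) + 1) u x‖₊ : ℝ≥0∞) ^ P :=
        lintegral_iSup hmeas hmono
    _ ≤ ENNReal.ofReal (B ^ P) := iSup_le Hm
end Key

section KeyInt
variable {n : ℕ} {K : EV n → ℝ} {Ω : Set (EV n)}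

lemma key_integral (hn : 0 < n) (hΩb : Bornology.IsBounded Ω)
    (hKpos : ∀ x : EV n, x ≠ 0 → 0 < K x)
    (hK1 : Integrable (fun x : EV n => min (‖x‖ ^ 2) 1 * K x))
    {P c : ℝ} (hP : 0 < P) (hc : 0 < c)
    (hub : ∀ r ∈ {ρ : ℝ | ∃ u, MemX0 K Ω u ∧
        ¬ (∀ᵐ x ∂(volume : Measure (EV n)), u x = 0) ∧
        ρ = lpNorm Ω P u / gNorm K u}, r ≤ c)
    {u : EV n → ℝ} (hu : MemX0 K Ω u) :
    IntegrableOn (fun x => |u x| ^ P) Ω ∧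
      ∫ x in Ω, |u x| ^ P ≤ (c * gNorm K u) ^ P := by
  have hkey := key_lintegral hn hΩb hKpos hK1 hP hc hub hu
  have hmeas : Measurable (fun x => |u x| ^ P) := hu.meas.abs.pow_const P
  have hnn : ∀ x : EV n, (0:ℝ) ≤ |u x| ^ P := fun x => Real.rpow_nonneg (abs_nonneg _) P
  have heq : ∀ x : EV n, (‖|u x| ^ P‖₊ : ℝ≥0∞) = (‖u x‖₊ : ℝ≥0∞) ^ P := by
    intro x
    rw [← enorm_eq_nnnorm, Real.enorm_eq_ofReal_abs, abs_of_nonneg (hnn x), ennnorm_rpow_abs _ hP.le]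
  have hint : IntegrableOn (fun x => |u x| ^ P) Ω := by
    refine ⟨hmeas.aestronglyMeasurable, ?_⟩
    rw [MeasureTheory.hasFiniteIntegral_def]
    calc ∫⁻ x in Ω, (‖|u x| ^ P‖₊ : ℝ≥0∞)
        = ∫⁻ x in Ω, (‖u x‖₊ : ℝ≥0∞) ^ P := by
          apply lintegral_congr_ae; filter_upwards with x using heq x
      _ ≤ ENNReal.ofReal ((c * gNorm K u) ^ P) := hkey
      _ < ⊤ := ENNReal.ofReal_lt_top
  refine ⟨hint, ?_⟩
  have h1 : ENNReal.ofReal (∫ x in Ω, |u x| ^ P) ≤ ENNReal.ofReal ((c * gNorm K u) ^ P) := by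
    rw [MeasureTheory.ofReal_integral_eq_lintegral_ofReal hint
      (by filter_upwards with x using hnn x)]
    calc ∫⁻ x in Ω, ENNReal.ofReal (|u x| ^ P)
        = ∫⁻ x in Ω, (‖u x‖₊ : ℝ≥0∞) ^ P := by
          apply lintegral_congr_ae
          filter_upwards with x
          rw [← ennnorm_rpow_abs _ hP.le]
      _ ≤ _ := hkey
  have h2 := ENNReal.toReal_mono ENNReal.ofReal_ne_top h1
  rwa [ENNReal.toReal_ofReal (integral_nonneg hnn),
    ENNReal.toReal_ofReal (Real.rpow_nonneg (mul_nonneg hc.le (gNorm_nonneg u)) P)] at h2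

lemma holder_bound (hΩb : Bornology.IsBounded Ω) {u : EV n → ℝ} (hmeas : Measurable u)
    {P r : ℝ} (hr0 : 0 < r) (hrP : r < P)
    (hI : IntegrableOn (fun x => |u x| ^ P) Ω) :
    IntegrableOn (fun x => |u x| ^ r) Ω ∧
      ∫ x in Ω, |u x| ^ r ≤
        ((volume Ω).toReal) ^ ((P - r) / P) * (∫ x in Ω, |u x| ^ P) ^ (r / P) := by
  have hP0 : 0 < P := hr0.trans hrP
  set μ := (volume : Measure (EV n)).restrict Ω with hμ
  set φ : EV n → ℝ≥0∞ := fun x => (‖u x‖₊ : ℝ≥0∞) with hφ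
  have hφm : Measurable φ := hmeas.nnnorm.coe_nnreal_ennreal
  have hconj : Real.HolderConjugate (P / r) (P / (P - r)) := by
    rw [Real.holderConjugate_iff]
    constructor
    · exact (one_lt_div hr0).mpr hrP
    · rw [inv_div, inv_div]
      field_simp
      ring
  have hH := ENNReal.lintegral_mul_le_Lp_mul_Lq μ hconj
    ((hφm.pow_const r).aemeasurable) (aemeasurable_const (b := (1:ℝ≥0∞)))
  have e1 : (fun a => (φ a ^ r) ^ (P / r)) = fun a => φ a ^ P := by
    funext x
    rw [← ENNReal.rpow_mul]
    congr 1
    field_simp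
  have hH2 : ∫⁻ x, φ x ^ r ∂μ
      ≤ (∫⁻ x, φ x ^ P ∂μ) ^ (r / P) * (volume Ω) ^ ((P - r) / P) := by
    simp only [Pi.mul_apply, mul_one, ENNReal.one_rpow, one_div_div] at hH
    rw [e1, lintegral_one, hμ, Measure.restrict_apply_univ] at hH
    have er : r / P = r * P⁻¹ := div_eq_mul_inv r P
    have er2 : (P - r) / P = (P - r) * P⁻¹ := div_eq_mul_inv _ _
    convert hH using 2 <;> field_simp
  have hnnP : ∀ x : EV n, (0:ℝ) ≤ |u x| ^ P := fun x => Real.rpow_nonneg (abs_nonneg _) P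
  have hnnr : ∀ x : EV n, (0:ℝ) ≤ |u x| ^ r := fun x => Real.rpow_nonneg (abs_nonneg _) r
  have hAP : ∫⁻ x, φ x ^ P ∂μ = ENNReal.ofReal (∫ x in Ω, |u x| ^ P) := by
    rw [MeasureTheory.ofReal_integral_eq_lintegral_ofReal hI
      (by filter_upwards with x using hnnP x)]
    apply lintegral_congr_ae
    filter_upwards with x
    rw [hφ, ennnorm_rpow_abs _ hP0.le]
  have hRfin : (∫⁻ x, φ x ^ P ∂μ) ^ (r / P) * (volume Ω) ^ ((P - r) / P) ≠ ⊤ := by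
    apply ENNReal.mul_ne_top
    · exact (ENNReal.rpow_lt_top_of_nonneg (div_nonneg hr0.le hP0.le)
        (by rw [hAP]; exact ENNReal.ofReal_ne_top)).ne
    · exact (ENNReal.rpow_lt_top_of_nonneg (div_nonneg (by linarith) hP0.le)
        hΩb.measure_lt_top.ne).ne
  have hmr : Measurable (fun x => |u x| ^ r) := hmeas.abs.pow_const r
  have heqr : ∀ x : EV n, (‖|u x| ^ r‖₊ : ℝ≥0∞) = φ x ^ r := by
    intro x
    rw [← enorm_eq_nnnorm, Real.enorm_eq_ofReal_abs, abs_of_nonneg (hnnr x), hφ, ennnorm_rpow_abs _ hr0.le]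
  have hintr : IntegrableOn (fun x => |u x| ^ r) Ω := by
    refine ⟨hmr.aestronglyMeasurable, ?_⟩
    rw [MeasureTheory.hasFiniteIntegral_def]
    calc ∫⁻ x, (‖|u x| ^ r‖₊ : ℝ≥0∞) ∂μ = ∫⁻ x, φ x ^ r ∂μ := by
          apply lintegral_congr_ae; filter_upwards with x using heqr x
      _ ≤ _ := hH2
      _ < ⊤ := lt_top_iff_ne_top.mpr hRfin
  refine ⟨hintr, ?_⟩
  have h1 : ENNReal.ofReal (∫ x in Ω, |u x| ^ r)
      ≤ (∫⁻ x, φ x ^ P ∂μ) ^ (r / P) * (volume Ω) ^ ((P - r) / P) := by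
    rw [MeasureTheory.ofReal_integral_eq_lintegral_ofReal hintr
      (by filter_upwards with x using hnnr x)]
    calc ∫⁻ x, ENNReal.ofReal (|u x| ^ r) ∂μ = ∫⁻ x, φ x ^ r ∂μ := by
          apply lintegral_congr_ae
          filter_upwards with x
          rw [hφ, ennnorm_rpow_abs _ hr0.le]
      _ ≤ _ := hH2
  have h2 := ENNReal.toReal_mono hRfin h1
  rw [ENNReal.toReal_ofReal (integral_nonneg hnnr)] at h2
  rw [ENNReal.toReal_mul, ← ENNReal.toReal_rpow, ← ENNReal.toReal_rpow, hAP,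
    ENNReal.toReal_ofReal (integral_nonneg hnnP)] at h2
  rw [mul_comm] at h2
  exact h2

end KeyInt

section Gfun
variable {g : ℝ → ℝ} {a₁ a₂ q : ℝ}

lemma abs_le_of_mem_uIoc {a b t : ℝ} (h : t ∈ Set.uIoc a b) : |t| ≤ max |a| |b| := by
  rcases Set.mem_uIoc.mp h with ⟨h1, h2⟩ | ⟨h1, h2⟩
  · exact abs_le_max_abs_abs h1.le h2
  · rw [max_comm]
    exact abs_le_max_abs_abs h1.le h2

lemma G_abs_bound (hgc : Continuous g) (ha₂ : 0 ≤ a₂) (hq : 1 ≤ q)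
    (hg1 : ∀ t : ℝ, |g t| ≤ a₁ + a₂ * |t| ^ (q - 1)) (y : ℝ) :
    |∫ τ in (0:ℝ)..y, g τ| ≤ a₁ * |y| + a₂ * |y| ^ q := by
  have hb : ∀ t ∈ Set.uIoc (0:ℝ) y, ‖g t‖ ≤ a₁ + a₂ * |y| ^ (q - 1) := by
    intro t ht
    have h1 : |t| ≤ |y| := by simpa using abs_le_of_mem_uIoc ht
    refine le_trans (hg1 t) (add_le_add le_rfl ?_)
    exact mul_le_mul_of_nonneg_left
      (Real.rpow_le_rpow (abs_nonneg t) h1 (by linarith)) ha₂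
  have h := intervalIntegral.norm_integral_le_of_norm_le_const hb
  rw [sub_zero, Real.norm_eq_abs] at h
  calc |∫ τ in (0:ℝ)..y, g τ| ≤ (a₁ + a₂ * |y| ^ (q - 1)) * |y| := h
    _ = a₁ * |y| + a₂ * (|y| ^ (q - 1) * |y|) := by ring
    _ = a₁ * |y| + a₂ * |y| ^ q := by rw [rpow_sub_one_mul (abs_nonneg y) hq]

lemma G_diff_bound (hgc : Continuous g) (ha₂ : 0 ≤ a₂) (hq : 1 ≤ q)
    (hg1 : ∀ t : ℝ, |g t| ≤ a₁ + a₂ * |t| ^ (q - 1)) {t : ℝ} (ht0 : 0 ≤ t) (ht1 : t ≤ 1)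
    (y : ℝ) :
    (∫ τ in (0:ℝ)..y, g τ) - (∫ τ in (0:ℝ)..(t * y), g τ)
      ≤ (1 - t) * (a₁ * |y| + a₂ * |y| ^ q) := by
  have hadd : (∫ τ in (0:ℝ)..(t * y), g τ) + (∫ τ in (t * y)..y, g τ)
      = ∫ τ in (0:ℝ)..y, g τ :=
    intervalIntegral.integral_add_adjacent_intervals
      (hgc.intervalIntegrable _ _) (hgc.intervalIntegrable _ _)
  have hb : ∀ τ ∈ Set.uIoc (t * y) y, ‖g τ‖ ≤ a₁ + a₂ * |y| ^ (q - 1) := by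
    intro τ hτ
    have h1 : |τ| ≤ |y| := by
      refine le_trans (abs_le_of_mem_uIoc hτ) (max_le ?_ le_rfl)
      rw [abs_mul]
      exact mul_le_of_le_one_left (abs_nonneg y) (by rwa [abs_of_nonneg ht0])
    refine le_trans (hg1 τ) (add_le_add le_rfl ?_)
    exact mul_le_mul_of_nonneg_left
      (Real.rpow_le_rpow (abs_nonneg τ) h1 (by linarith)) ha₂
  have h := intervalIntegral.norm_integral_le_of_norm_le_const hb
  rw [Real.norm_eq_abs] at h
  have h2 : |y - t * y| = (1 - t) * |y| := by
    rw [show y - t * y = (1 - t) * y by ring, abs_mul, abs_of_nonneg (by linarith : (0:ℝ) ≤ 1 - t)]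
  calc (∫ τ in (0:ℝ)..y, g τ) - (∫ τ in (0:ℝ)..(t * y), g τ)
      = ∫ τ in (t * y)..y, g τ := by linarith
    _ ≤ |∫ τ in (t * y)..y, g τ| := le_abs_self _
    _ ≤ (a₁ + a₂ * |y| ^ (q - 1)) * ((1 - t) * |y|) := by rw [← h2]; exact h
    _ = (1 - t) * (a₁ * |y| + a₂ * (|y| ^ (q - 1) * |y|)) := by ring
    _ = (1 - t) * (a₁ * |y| + a₂ * |y| ^ q) := by rw [rpow_sub_one_mul (abs_nonneg y) hq]

end Gfun

section Main
variable {n : ℕ} {K : EV n → ℝ} {Ω : Set (EV n)}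

/-- All integrability facts and bounds for a member of the ball of radius `ρ`. -/
lemma estimates (hn : 0 < n) (hΩb : Bornology.IsBounded Ω)
    (hKpos : ∀ x : EV n, x ≠ 0 → 0 < K x)
    (hK1 : Integrable (fun x : EV n => min (‖x‖ ^ 2) 1 * K x))
    {P c : ℝ} (hP1 : 1 < P) (hc : 0 < c)
    (hub : ∀ r ∈ {ρ : ℝ | ∃ u, MemX0 K Ω u ∧
        ¬ (∀ᵐ x ∂(volume : Measure (EV n)), u x = 0) ∧
        ρ = lpNorm Ω P u / gNorm K u}, r ≤ c)
    {q : ℝ} (hq₁ : 1 ≤ q) (hq₂ : q < P)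
    {g : ℝ → ℝ} (hgc : Continuous g) {a₁ a₂ : ℝ} (ha₁ : 0 ≤ a₁) (ha₂ : 0 ≤ a₂)
    (hg1 : ∀ t : ℝ, |g t| ≤ a₁ + a₂ * |t| ^ (q - 1))
    {ρ : ℝ} (hρ : 0 < ρ)
    {u : EV n → ℝ} (hu : MemX0 K Ω u) (hgu : gNorm K u ≤ ρ) :
    IntegrableOn (fun x => |u x| ^ P) Ω ∧
    (∫ x in Ω, |u x| ^ P) ≤ (c * ρ) ^ P ∧
    IntegrableOn (fun x => |u x|) Ω ∧
    (∫ x in Ω, |u x|) ≤ (volume Ω).toReal ^ ((P - 1) / P) * (c * ρ) ∧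
    IntegrableOn (fun x => |u x| ^ q) Ω ∧
    (∫ x in Ω, |u x| ^ q) ≤ (volume Ω).toReal ^ ((P - q) / P) * (c * ρ) ^ q ∧
    IntegrableOn (fun x => ∫ τ in (0:ℝ)..(u x), g τ) Ω ∧
    (∫ x in Ω, (∫ τ in (0:ℝ)..(u x), g τ))
      ≤ a₁ * ((volume Ω).toReal ^ ((P - 1) / P) * (c * ρ))
        + a₂ * ((volume Ω).toReal ^ ((P - q) / P) * (c * ρ) ^ q) := by
  have hP0 : (0:ℝ) < P := by linarith
  have hcρ : (0:ℝ) ≤ c * ρ := by positivity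
  obtain ⟨hIP, hBP0⟩ := key_integral hn hΩb hKpos hK1 hP0 hc hub hu
  have hBP : (∫ x in Ω, |u x| ^ P) ≤ (c * ρ) ^ P := by
    refine le_trans hBP0 (Real.rpow_le_rpow
      (mul_nonneg hc.le (gNorm_nonneg u)) ?_ hP0.le)
    exact mul_le_mul_of_nonneg_left hgu hc.le
  have hAP0 : (0:ℝ) ≤ ∫ x in Ω, |u x| ^ P :=
    integral_nonneg fun x => Real.rpow_nonneg (abs_nonneg _) P
  -- the generic Hölder consequence for r < P
  have hHold : ∀ r : ℝ, 0 < r → r < P →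
      IntegrableOn (fun x => |u x| ^ r) Ω ∧
      (∫ x in Ω, |u x| ^ r) ≤ (volume Ω).toReal ^ ((P - r) / P) * (c * ρ) ^ r := by
    intro r hr0 hrP
    obtain ⟨hIr, hBr⟩ := holder_bound hΩb hu.meas hr0 hrP hIP
    refine ⟨hIr, le_trans hBr ?_⟩
    apply mul_le_mul_of_nonneg_left _ (Real.rpow_nonneg ENNReal.toReal_nonneg _)
    calc (∫ x in Ω, |u x| ^ P) ^ (r / P) ≤ ((c * ρ) ^ P) ^ (r / P) :=
          Real.rpow_le_rpow hAP0 hBP (by positivity)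
      _ = (c * ρ) ^ r := by
          rw [← Real.rpow_mul hcρ]
          congr 1
          field_simp
  obtain ⟨hI1', hB1'⟩ := hHold 1 one_pos hP1
  obtain ⟨hIq, hBq⟩ := hHold q (by linarith) hq₂
  have habs1 : (fun x : EV n => |u x| ^ (1:ℝ)) = fun x => |u x| := by
    funext x; rw [Real.rpow_one]
  rw [habs1] at hI1' hB1'
  rw [Real.rpow_one] at hB1'
  refine ⟨hIP, hBP, hI1', hB1', hIq, hBq, ?_⟩
  -- the primitive of g
  have hGc : Continuous (fun y : ℝ => ∫ τ in (0:ℝ)..y, g τ) :=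
    intervalIntegral.continuous_primitive (fun a b => hgc.intervalIntegrable a b) 0
  have hdomI : IntegrableOn (fun x => a₁ * |u x| + a₂ * |u x| ^ q) Ω :=
    (hI1'.const_mul a₁).add (hIq.const_mul a₂)
  have hGint : IntegrableOn (fun x => ∫ τ in (0:ℝ)..(u x), g τ) Ω := by
    refine hdomI.mono' ((hGc.measurable.comp hu.meas).aestronglyMeasurable) ?_
    filter_upwards with x
    rw [Real.norm_eq_abs]
    exact G_abs_bound hgc ha₂ hq₁ hg1 (u x)
  refine ⟨hGint, ?_⟩
  calc (∫ x in Ω, (∫ τ in (0:ℝ)..(u x), g τ))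
      ≤ ∫ x in Ω, (a₁ * |u x| + a₂ * |u x| ^ q) := by
        refine integral_mono hGint hdomI fun x => ?_
        exact le_trans (le_abs_self _) (G_abs_bound hgc ha₂ hq₁ hg1 (u x))
    _ = a₁ * (∫ x in Ω, |u x|) + a₂ * (∫ x in Ω, |u x| ^ q) := by
        rw [integral_add (hI1'.const_mul a₁) (hIq.const_mul a₂),
          integral_const_mul, integral_const_mul]
    _ ≤ a₁ * ((volume Ω).toReal ^ ((P - 1) / P) * (c * ρ))
        + a₂ * ((volume Ω).toReal ^ ((P - q) / P) * (c * ρ) ^ q) := by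
        apply add_le_add
        · exact mul_le_mul_of_nonneg_left hB1' ha₁
        · exact mul_le_mul_of_nonneg_left hBq ha₂

/-- scaling a member of `X₀`. -/
lemma smul_memX0 {u : EV n → ℝ} (hu : MemX0 K Ω u) (t : ℝ) :
    MemX0 K Ω (fun x => t * u x) ∧
      gNorm K (fun x => t * u x) = |t| * gNorm K u := by
  have hfin : Integrable
      (fun p : EV n × EV n => (t * u p.1 - t * u p.2) ^ 2 * K (p.1 - p.2)) := by
    have h := hu.fin.const_mul (t ^ 2)
    have e : (fun p : EV n × EV n => (t * u p.1 - t * u p.2) ^ 2 * K (p.1 - p.2))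
        = fun p : EV n × EV n => t ^ 2 * ((u p.1 - u p.2) ^ 2 * K (p.1 - p.2)) := by
      funext p; ring
    rwa [e]
  constructor
  · refine ⟨hu.meas.const_mul t, ?_, hfin⟩
    filter_upwards [hu.zero] with x hx hxo
    rw [hx hxo, mul_zero]
  · have e2 : gInner K (fun x => t * u x) (fun x => t * u x) = t ^ 2 * gInner K u u := by
      unfold gInner
      rw [← integral_const_mul]
      congr 1
      funext p
      ring
    rw [gNorm, gNorm, e2, Real.sqrt_mul (sq_nonneg t), Real.sqrt_sq_eq_abs]

end Main

section Zerofun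
variable {n : ℕ} {K : EV n → ℝ} {Ω : Set (EV n)}

lemma zero_memX0 : MemX0 K Ω (fun _ => (0:ℝ)) ∧ gNorm K (fun _ => (0:ℝ)) = 0 := by
  have e : (fun p : EV n × EV n => ((0:ℝ) - 0) ^ 2 * K (p.1 - p.2))
      = fun _ : EV n × EV n => (0:ℝ) := by funext p; ring
  refine ⟨⟨measurable_const, Filter.Eventually.of_forall (fun x _ => rfl), by
    rw [e]; exact integrable_zero _ _ _⟩, ?_⟩
  have e2 : gInner K (fun _ => (0:ℝ)) (fun _ => (0:ℝ)) = 0 := by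
    unfold gInner
    have : (fun p : EV n × EV n => ((0:ℝ) - 0) * ((0:ℝ) - 0) * K (p.1 - p.2))
        = fun _ : EV n × EV n => (0:ℝ) := by funext p; ring
    rw [this, integral_zero]
  rw [gNorm, e2, Real.sqrt_zero]

lemma energyTilde_zero {s μ lam : ℝ} {g : ℝ → ℝ} (hP0 : twoStar n s ≠ 0) :
    energyTilde s K Ω μ lam g (fun _ => (0:ℝ)) = 0 := by
  unfold energyTilde
  have e1 : (fun x : EV n => |(0:ℝ)| ^ twoStar n s) = fun _ : EV n => (0:ℝ) := by
    funext x; rw [abs_zero, Real.zero_rpow hP0]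
  have e2 : ∀ x : EV n, (∫ τ in (0:ℝ)..(0:ℝ), g τ) = 0 := fun _ =>
    intervalIntegral.integral_same
  rw [e1, integral_zero, mul_zero, zero_add]
  have : (∫ x in Ω, (∫ τ in (0:ℝ)..(0:ℝ), g τ) ∂(volume : Measure (EV n))) = 0 := by
    rw [intervalIntegral.integral_same, integral_zero]
  rw [this, mul_zero]

end Zerofun
set_option maxHeartbeats 1000000 in
/-- **The key incremental-ratio estimate** (inequality (3.13) of the paper):
`limsup_{ε→0⁺} φ(ε,ρ) ≤ c^{2*} μ ρ^{2*−1} + λ a₁ c |Ω|^{(2*−1)/2*}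
+ λ a₂ c^q |Ω|^{(2*−q)/2*} ρ^{q−1}`. -/
theorem statement10
    (n : ℕ) (s : ℝ) (hs : s ∈ Set.Ioo (0:ℝ) 1) (hn : 2 * s < n)
    (Ω : Set (EV n)) (hΩo : IsOpen Ω) (hΩne : Ω.Nonempty) (hΩb : Bornology.IsBounded Ω)
    (K : EV n → ℝ)
    (hKpos : ∀ x : EV n, x ≠ 0 → 0 < K x)
    (hK1 : Integrable (fun x : EV n => min (‖x‖ ^ 2) 1 * K x))
    (hK2 : ∃ k₀ > 0, ∀ x : EV n, x ≠ 0 → k₀ * ‖x‖ ^ (-((n : ℝ) + 2 * s)) ≤ K x)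
    (c : ℝ) (hc : 0 < c)
    (hclub : IsLUB {ρ : ℝ | ∃ u, MemX0 K Ω u ∧
        ¬ (∀ᵐ x ∂(volume : Measure (EV n)), u x = 0) ∧
        ρ = lpNorm Ω (twoStar n s) u / gNorm K u} c)
    (lam μ : ℝ) (hlam : 0 < lam) (hμ : 0 < μ)
    (g : ℝ → ℝ) (hgc : Continuous g)
    (a₁ a₂ q : ℝ) (ha₁ : 0 < a₁) (ha₂ : 0 < a₂) (hq₁ : 1 ≤ q) (hq₂ : q < twoStar n s)
    (hg1 : ∀ t : ℝ, |g t| ≤ a₁ + a₂ * |t| ^ (q - 1))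
    (SB : ℝ → ℝ)
    (hSB : ∀ ρ : ℝ, SB ρ =
      sSup (energyTilde s K Ω μ lam g '' {u | MemX0 K Ω u ∧ gNorm K u ≤ ρ}))
    (ρ : ℝ) (hρ : 0 < ρ) :
    limsup (fun ε => (SB ρ - SB (ρ - ε)) / ε) (𝓝[>] (0:ℝ)) ≤
      c ^ twoStar n s * μ * ρ ^ (twoStar n s - 1) +
        lam * a₁ * c * (volume Ω).toReal ^ ((twoStar n s - 1) / twoStar n s) +
        lam * a₂ * c ^ q * (volume Ω).toReal ^ ((twoStar n s - q) / twoStar n s)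
          * ρ ^ (q - 1) := by
  -- basic positivity facts
  have hn0 : 0 < n := by
    have h1 : (0:ℝ) < n := lt_trans (by linarith [hs.1] : (0:ℝ) < 2 * s) hn
    exact_mod_cast h1
  set P : ℝ := twoStar n s with hPdef
  have hP1 : 1 < P := lt_of_le_of_lt hq₁ hq₂
  have hP0 : (0:ℝ) < P := by linarith
  set V : ℝ := (volume Ω).toReal with hVdef
  have hV0 : 0 ≤ V := ENNReal.toReal_nonneg
  have hub : ∀ r ∈ {ρ : ℝ | ∃ u, MemX0 K Ω u ∧
      ¬ (∀ᵐ x ∂(volume : Measure (EV n)), u x = 0) ∧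
      ρ = lpNorm Ω P u / gNorm K u}, r ≤ c := fun r hr => hclub.1 hr
  obtain ⟨k₀, hk₀, hK2'⟩ := hK2
  have hKpos' : ∀ x : EV n, x ≠ 0 → 0 < K x := hKpos
  set R : ℝ := c ^ P * μ * ρ ^ (P - 1) + lam * a₁ * c * V ^ ((P - 1) / P) +
      lam * a₂ * c ^ q * V ^ ((P - q) / P) * ρ ^ (q - 1) with hRdef
  have hR0 : 0 ≤ R := by
    rw [hRdef]
    have h1 : (0:ℝ) ≤ c ^ P * μ * ρ ^ (P - 1) :=
      mul_nonneg (mul_nonneg (Real.rpow_nonneg hc.le _) hμ.le) (Real.rpow_nonneg hρ.le _)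
    have h2 : (0:ℝ) ≤ lam * a₁ * c * V ^ ((P - 1) / P) :=
      mul_nonneg (mul_nonneg (mul_nonneg hlam.le ha₁.le) hc.le) (Real.rpow_nonneg hV0 _)
    have h3 : (0:ℝ) ≤ lam * a₂ * c ^ q * V ^ ((P - q) / P) * ρ ^ (q - 1) :=
      mul_nonneg (mul_nonneg (mul_nonneg (mul_nonneg hlam.le ha₂.le)
        (Real.rpow_nonneg hc.le _)) (Real.rpow_nonneg hV0 _)) (Real.rpow_nonneg hρ.le _)
    linarith
  -- the balls
  set Ball : ℝ → Set (EV n → ℝ) := fun r => {u | MemX0 K Ω u ∧ gNorm K u ≤ r} with hBall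
  set S : ℝ → Set ℝ := fun r => energyTilde s K Ω μ lam g '' Ball r with hS
  have hSmono : ∀ r r' : ℝ, r ≤ r' → S r ⊆ S r' := by
    intro r r' hrr'
    apply Set.image_mono
    intro u hu
    exact ⟨hu.1, le_trans hu.2 hrr'⟩
  -- a uniform upper bound on S ρ
  have hBdd : BddAbove (S ρ) := by
    refine ⟨μ / P * (c * ρ) ^ P + lam * (a₁ * (V ^ ((P - 1) / P) * (c * ρ))
      + a₂ * (V ^ ((P - q) / P) * (c * ρ) ^ q)), ?_⟩
    rintro y ⟨u, ⟨hu, hgu⟩, rfl⟩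
    obtain ⟨hIP, hBP, hI1, hB1, hIq, hBq, hIG, hBG⟩ :=
      estimates hn0 hΩb hKpos hK1 hP1 hc hub hq₁ hq₂ hgc ha₁.le ha₂.le hg1 hρ hu hgu
    unfold energyTilde
    have hμP : (0:ℝ) ≤ μ / P := by positivity
    have t1 : μ / P * (∫ x in Ω, |u x| ^ twoStar n s) ≤ μ / P * (c * ρ) ^ P :=
      mul_le_mul_of_nonneg_left hBP hμP
    have t2 : lam * (∫ x in Ω, (∫ τ in (0:ℝ)..(u x), g τ))
        ≤ lam * (a₁ * (V ^ ((P - 1) / P) * (c * ρ)) + a₂ * (V ^ ((P - q) / P) * (c * ρ) ^ q)) :=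
      mul_le_mul_of_nonneg_left hBG hlam.le
    linarith
  -- the zero function gives nonnegativity of the suprema
  have hzero_mem : ∀ r : ℝ, 0 ≤ r → (0:ℝ) ∈ S r := by
    intro r hr
    obtain ⟨hz1, hz2⟩ := zero_memX0 (K := K) (Ω := Ω)
    have hb : (fun _ : EV n => (0:ℝ)) ∈ Ball r := ⟨hz1, by rw [hz2]; exact hr⟩
    show (0:ℝ) ∈ energyTilde s K Ω μ lam g '' Ball r
    exact ⟨(fun _ : EV n => (0:ℝ)), hb, energyTilde_zero hP0.ne'⟩
  -- the key incremental bound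
  have hkey : ∀ ε : ℝ, ε ∈ Set.Ioo (0:ℝ) ρ → SB ρ ≤ SB (ρ - ε) + ε * R := by
    intro ε hε
    obtain ⟨hε0, hερ⟩ := hε
    set t : ℝ := (ρ - ε) / ρ with htdef
    have ht0 : 0 ≤ t := div_nonneg (by linarith) hρ.le
    have ht1 : t ≤ 1 := by
      rw [htdef, div_le_one hρ]; linarith
    have htε : (1 - t) * ρ = ε := by
      rw [htdef]; field_simp; ring
    have hBdd2 : BddAbove (S (ρ - ε)) := hBdd.mono (hSmono _ _ (by linarith))
    rw [hSB ρ, hSB (ρ - ε)]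
    have hSB2_nonneg : 0 ≤ sSup (S (ρ - ε)) :=
      le_csSup hBdd2 (hzero_mem _ (by linarith))
    refine Real.sSup_le ?_ (by nlinarith)
    rintro y ⟨u, ⟨hu, hgu⟩, rfl⟩
    -- the rescaled function
    obtain ⟨hut, hgnt⟩ := smul_memX0 hu t
    have hgut : gNorm K (fun x => t * u x) ≤ ρ - ε := by
      rw [hgnt, abs_of_nonneg ht0, htdef]
      calc (ρ - ε) / ρ * gNorm K u ≤ (ρ - ε) / ρ * ρ := by
            apply mul_le_mul_of_nonneg_left hgu (div_nonneg (by linarith) hρ.le)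
        _ = ρ - ε := by field_simp
    have hmem2 : energyTilde s K Ω μ lam g (fun x => t * u x) ∈ S (ρ - ε) :=
      ⟨fun x => t * u x, ⟨hut, hgut⟩, rfl⟩
    have hle2 : energyTilde s K Ω μ lam g (fun x => t * u x) ≤ sSup (S (ρ - ε)) :=
      le_csSup hBdd2 hmem2
    -- estimates for u and for t • u
    obtain ⟨hIP, hBP, hI1, hB1, hIq, hBq, hIG, hBG⟩ :=
      estimates hn0 hΩb hKpos hK1 hP1 hc hub hq₁ hq₂ hgc ha₁.le ha₂.le hg1 hρ hu hgu
    have hgut' : gNorm K (fun x => t * u x) ≤ ρ := le_trans hgut (by linarith)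
    obtain ⟨hIPt, hBPt, hI1t, hB1t, hIqt, hBqt, hIGt, hBGt⟩ :=
      estimates hn0 hΩb hKpos hK1 hP1 hc hub hq₁ hq₂ hgc ha₁.le ha₂.le hg1 hρ hut hgut'
    -- the power term rescales
    have hAP0 : (0:ℝ) ≤ ∫ x in Ω, |u x| ^ P :=
      integral_nonneg fun x => Real.rpow_nonneg (abs_nonneg _) P
    have e_At : (∫ x in Ω, |t * u x| ^ twoStar n s) = t ^ P * ∫ x in Ω, |u x| ^ P := by
      rw [← integral_const_mul]
      apply integral_congr_ae
      filter_upwards with x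
      rw [← hPdef, abs_mul, abs_of_nonneg ht0, Real.mul_rpow ht0 (abs_nonneg _)]
    -- the G term
    have hGdiff : (∫ x in Ω, (∫ τ in (0:ℝ)..(u x), g τ))
        - (∫ x in Ω, (∫ τ in (0:ℝ)..(t * u x), g τ))
        ≤ (1 - t) * (a₁ * (∫ x in Ω, |u x|) + a₂ * (∫ x in Ω, |u x| ^ q)) := by
      rw [← integral_sub hIG hIGt]
      have hdomI : IntegrableOn
          (fun x => (1 - t) * (a₁ * |u x| + a₂ * |u x| ^ q)) Ω :=
        ((hI1.const_mul a₁).add (hIq.const_mul a₂)).const_mul (1 - t)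
      calc (∫ x in Ω, ((∫ τ in (0:ℝ)..(u x), g τ) - (∫ τ in (0:ℝ)..(t * u x), g τ)))
          ≤ ∫ x in Ω, (1 - t) * (a₁ * |u x| + a₂ * |u x| ^ q) := by
            refine integral_mono (hIG.sub hIGt) hdomI fun x => ?_
            exact G_diff_bound hgc ha₂.le hq₁ hg1 ht0 ht1 (u x)
        _ = (1 - t) * (a₁ * (∫ x in Ω, |u x|) + a₂ * (∫ x in Ω, |u x| ^ q)) := by
            rw [integral_const_mul]
            congr 1
            rw [integral_add (hI1.const_mul a₁) (hIq.const_mul a₂),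
              integral_const_mul, integral_const_mul]
    -- Bernoulli
    have hBern : 1 - t ^ P ≤ P * (1 - t) := by
      have h := one_add_mul_self_le_rpow_one_add (by linarith : (-1:ℝ) ≤ t - 1) hP1.le
      have e : (1:ℝ) + (t - 1) = t := by ring
      rw [e] at h
      linarith
    have htP1 : t ^ P ≤ 1 := Real.rpow_le_one ht0 ht1 hP0.le
    -- power term estimate
    have d1 : μ / P * (∫ x in Ω, |u x| ^ P) - μ / P * (t ^ P * ∫ x in Ω, |u x| ^ P)
        ≤ ε * (c ^ P * μ * ρ ^ (P - 1)) := by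
      have h1 : (1 - t ^ P) * (∫ x in Ω, |u x| ^ P) ≤ (P * (1 - t)) * ((c * ρ) ^ P) :=
        mul_le_mul hBern hBP hAP0 (mul_nonneg hP0.le (by linarith))
      have h2 : μ / P * ((1 - t ^ P) * (∫ x in Ω, |u x| ^ P))
          ≤ μ / P * ((P * (1 - t)) * ((c * ρ) ^ P)) :=
        mul_le_mul_of_nonneg_left h1 (by positivity)
      have h3 : μ / P * ((P * (1 - t)) * ((c * ρ) ^ P)) = ε * (c ^ P * μ * ρ ^ (P - 1)) := by
        rw [Real.mul_rpow hc.le hρ.le, ← rpow_sub_one_mul hρ.le hP1.le, ← htε]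
        field_simp
      linarith [h2, h3]
    -- G term estimate
    have d2 : lam * (∫ x in Ω, (∫ τ in (0:ℝ)..(u x), g τ))
        - lam * (∫ x in Ω, (∫ τ in (0:ℝ)..(t * u x), g τ))
        ≤ ε * (lam * a₁ * c * V ^ ((P - 1) / P)
          + lam * a₂ * c ^ q * V ^ ((P - q) / P) * ρ ^ (q - 1)) := by
      have h1 : a₁ * (∫ x in Ω, |u x|) + a₂ * (∫ x in Ω, |u x| ^ q)
          ≤ a₁ * (V ^ ((P - 1) / P) * (c * ρ)) + a₂ * (V ^ ((P - q) / P) * (c * ρ) ^ q) :=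
        add_le_add (mul_le_mul_of_nonneg_left hB1 ha₁.le)
          (mul_le_mul_of_nonneg_left hBq ha₂.le)
      have h2 : (∫ x in Ω, (∫ τ in (0:ℝ)..(u x), g τ))
          - (∫ x in Ω, (∫ τ in (0:ℝ)..(t * u x), g τ))
          ≤ (1 - t) * (a₁ * (V ^ ((P - 1) / P) * (c * ρ))
            + a₂ * (V ^ ((P - q) / P) * (c * ρ) ^ q)) := by
        refine le_trans hGdiff (mul_le_mul_of_nonneg_left h1 (by linarith))
      have h3 : lam * ((1 - t) * (a₁ * (V ^ ((P - 1) / P) * (c * ρ))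
            + a₂ * (V ^ ((P - q) / P) * (c * ρ) ^ q)))
          = ε * (lam * a₁ * c * V ^ ((P - 1) / P)
            + lam * a₂ * c ^ q * V ^ ((P - q) / P) * ρ ^ (q - 1)) := by
        rw [Real.mul_rpow hc.le hρ.le, ← rpow_sub_one_mul hρ.le hq₁, ← htε]
        ring
      linarith [mul_le_mul_of_nonneg_left h2 hlam.le, h3]
    -- put it together
    have hεR : ε * R = ε * (c ^ P * μ * ρ ^ (P - 1))
        + ε * (lam * a₁ * c * V ^ ((P - 1) / P)
          + lam * a₂ * c ^ q * V ^ ((P - q) / P) * ρ ^ (q - 1)) := by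
      rw [hRdef]; ring
    have hfinal : energyTilde s K Ω μ lam g u
        ≤ energyTilde s K Ω μ lam g (fun x => t * u x) + ε * R := by
      unfold energyTilde
      rw [e_At, hεR, ← hPdef]
      linarith [d1, d2]
    linarith [hle2, hfinal]
  -- conclude via the eventual bound
  have hEv : ∀ᶠ ε in 𝓝[>] (0:ℝ), (SB ρ - SB (ρ - ε)) / ε ≤ R := by
    filter_upwards [Ioo_mem_nhdsGT_of_mem (Set.left_mem_Ico.mpr hρ)] with ε hε
    rw [div_le_iff₀ hε.1]
    have := hkey ε hε
    linarith
  have hEv0 : ∀ᶠ ε in 𝓝[>] (0:ℝ), (0:ℝ) ≤ (SB ρ - SB (ρ - ε)) / ε := by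
    filter_upwards [Ioo_mem_nhdsGT_of_mem (Set.left_mem_Ico.mpr hρ)] with ε hε
    have h1 : SB (ρ - ε) ≤ SB ρ := by
      rw [hSB ρ, hSB (ρ - ε)]
      refine csSup_le_csSup hBdd ⟨0, hzero_mem _ (by linarith [hε.1, hε.2])⟩
        (hSmono _ _ (by linarith [hε.1]))
    exact div_nonneg (by linarith) hε.1.le
  exact Filter.limsup_le_of_le (isCoboundedUnder_le_of_eventually_le _ hEv0) hEv
end
end

section
/- Let λ,μ > 0, r ∈ (0,1), and let g : [0,∞) → [0,∞) be continuous satisfying (g1'): there exist a₁,a₂ ≥ 0 and q ∈ [1,2*) with g(t) ≤ a₁ + a₂ t^{q−1} for all t ≥ 0. Define the singular energy E_{λ,μ}(u) := (1/2)‖u‖² − (μ/2*)∫_Ω (u⁺)^{2*} dx − (λ/r)∫_Ω (u⁺)^{r} dx − λ∫_Ω G(u⁺) dx, where u⁺ := max{u,0} and G(t) := ∫₀ᵗ g(τ)dτ. Then for every u ∈ X₀ with u > 0 a.e. in Ω there exists t₀ > 0 such that E_{λ,μ}(t u) < 0 for all t ∈ (0,t₀). In particular 0 is not a local minimizer of E_{λ,μ}.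 -/
open MeasureTheory Filter Topology Set

noncomputable section

section AuxiliaryLemmas

variable {n : ℕ}

/-- Combine a.e. properties on two factors into the product measure. -/
lemma aux_prod_ae {α β : Type*} [MeasurableSpace α] [MeasurableSpace β]
    {μ : Measure α} {ν : Measure β} [SFinite ν] {p : α → Prop} {q : β → Prop}
    (h1 : ∀ᵐ x ∂μ, p x) (h2 : ∀ᵐ y ∂ν, q y) :
    ∀ᵐ z ∂μ.prod ν, p z.1 ∧ q z.2 := by
  rw [ae_iff] at h1 h2 ⊢
  have hsub : {z : α × β | ¬(p z.1 ∧ q z.2)} ⊆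
      (MeasureTheory.toMeasurable μ {x | ¬ p x}) ×ˢ (Set.univ : Set β) ∪
      (Set.univ : Set α) ×ˢ (MeasureTheory.toMeasurable ν {y | ¬ q y}) := by
    intro z hz
    rcases not_and_or.mp hz with h | h
    · exact Or.inl ⟨MeasureTheory.subset_toMeasurable _ _ h, trivial⟩
    · exact Or.inr ⟨trivial, MeasureTheory.subset_toMeasurable _ _ h⟩
  refine measure_mono_null hsub (le_antisymm ?_ zero_le)
  refine le_trans (measure_union_le _ _) ?_
  rw [Measure.prod_prod, Measure.prod_prod, measure_toMeasurable, measure_toMeasurable, h1, h2]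
  simp

lemma aux_gInner_nonneg {K : EV n → ℝ} (hKpos : ∀ x : EV n, x ≠ 0 → 0 < K x)
    (u : EV n → ℝ) : 0 ≤ gInner K u u := by
  refine integral_nonneg fun p => ?_
  rcases eq_or_ne p.1 p.2 with h | h
  · simp [h]
  · have hK := hKpos (p.1 - p.2) (sub_ne_zero.mpr h)
    exact mul_nonneg (mul_self_nonneg _) hK.le

lemma aux_gInner_smul {K : EV n → ℝ} (t : ℝ) (u : EV n → ℝ) :
    gInner K (fun x => t * u x) (fun x => t * u x) = t ^ 2 * gInner K u u := by
  unfold gInner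
  rw [← integral_const_mul]
  exact integral_congr_ae (Filter.Eventually.of_forall fun p => by ring)

lemma aux_gNorm_smul {K : EV n → ℝ} {t : ℝ} (ht : 0 ≤ t) (u : EV n → ℝ) :
    gNorm K (fun x => t * u x) = t * gNorm K u := by
  unfold gNorm
  rw [aux_gInner_smul, Real.sqrt_mul (sq_nonneg t), Real.sqrt_sq ht]

lemma aux_memX0_smul {K : EV n → ℝ} {Ω : Set (EV n)} {u : EV n → ℝ}
    (hu : MemX0 K Ω u) (t : ℝ) : MemX0 K Ω (fun x => t * u x) := by
  refine ⟨hu.meas.const_mul t, ?_, ?_⟩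
  · filter_upwards [hu.zero] with x hx hxΩ
    rw [hx hxΩ, mul_zero]
  · have h : (fun p : EV n × EV n => (t * u p.1 - t * u p.2) ^ 2 * K (p.1 - p.2))
        = fun p : EV n × EV n => t ^ 2 * ((u p.1 - u p.2) ^ 2 * K (p.1 - p.2)) := by
      funext p; ring
    rw [h]
    exact hu.fin.const_mul _

/-- The kernel `K` is a.e. measurable, thanks to (k1). -/
lemma aux_K_aemeasurable {K : EV n → ℝ} (hn1 : n ≠ 0)
    (hK1 : Integrable (fun x : EV n => min (‖x‖ ^ 2) 1 * K x)) :
    AEMeasurable K (volume : Measure (EV n)) := by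
  haveI hnt : Nontrivial (EV n) := by
    refine ⟨EuclideanSpace.single ⟨0, Nat.pos_of_ne_zero hn1⟩ (1 : ℝ), 0, fun h => ?_⟩
    have := congrArg (fun v : EV n => v ⟨0, Nat.pos_of_ne_zero hn1⟩) h
    simp [EuclideanSpace.single_apply] at this
  haveI hatom : NullSingletonClass (volume : Measure (EV n)) := by infer_instance
  have hm : Measurable fun x : EV n => (min (‖x‖ ^ 2) 1)⁻¹ :=
    (((measurable_norm.pow_const 2).min measurable_const)).inv
  have h := (hm.aemeasurable.mul hK1.aemeasurable)
  refine h.congr ?_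
  have h0 : ∀ᵐ x ∂(volume : Measure (EV n)), x ≠ 0 := by
    have h00 : {x : EV n | ¬ x ≠ 0} = {0} := by ext x; simp
    rw [ae_iff, h00]
    exact measure_singleton 0
  filter_upwards [h0] with x hx
  have hpos : 0 < min (‖x‖ ^ 2) 1 := by
    have : 0 < ‖x‖ := norm_pos_iff.mpr hx
    have h2 : 0 < ‖x‖ ^ 2 := by positivity
    exact lt_min h2 one_pos
  simp only [Pi.mul_apply]
  field_simp

/-- The product-kernel function is a.e. strongly measurable. -/
lemma aux_Kprod_aesm {K : EV n → ℝ} (hn1 : n ≠ 0)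
    (hK1 : Integrable (fun x : EV n => min (‖x‖ ^ 2) 1 * K x)) :
    AEMeasurable (fun p : EV n × EV n => K (p.1 - p.2))
      (volume : Measure (EV n × EV n)) := by
  have hq : Measure.QuasiMeasurePreserving (fun p : EV n × EV n => p.1 - p.2)
      ((volume : Measure (EV n)).prod (volume : Measure (EV n)))
      (volume : Measure (EV n)) :=
    MeasureTheory.quasiMeasurePreserving_sub (volume : Measure (EV n)) (volume : Measure (EV n))
  have := (aux_K_aemeasurable hn1 hK1).comp_quasiMeasurePreserving hq
  rwa [← Measure.volume_eq_prod] at this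

lemma aux_memX0_abs {K : EV n → ℝ} {Ω : Set (EV n)} {u : EV n → ℝ} (hn1 : n ≠ 0)
    (hK1 : Integrable (fun x : EV n => min (‖x‖ ^ 2) 1 * K x))
    (hKpos : ∀ x : EV n, x ≠ 0 → 0 < K x)
    (hu : MemX0 K Ω u) : MemX0 K Ω (fun x => |u x|) := by
  refine ⟨hu.meas.abs, ?_, ?_⟩
  · filter_upwards [hu.zero] with x hx hxΩ
    rw [hx hxΩ, abs_zero]
  · refine Integrable.mono' hu.fin ?_ ?_
    · have hm : Measurable fun p : EV n × EV n => (|u p.1| - |u p.2|) ^ 2 :=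
        (((hu.meas.comp measurable_fst).abs.sub (hu.meas.comp measurable_snd).abs).pow_const 2)
      exact (hm.aemeasurable.mul (aux_Kprod_aesm hn1 hK1)).aestronglyMeasurable
    · refine Filter.Eventually.of_forall fun p => ?_
      rcases eq_or_ne p.1 p.2 with h | h
      · simp [h]
      · have hK := hKpos (p.1 - p.2) (sub_ne_zero.mpr h)
        have h1 : (|u p.1| - |u p.2|) ^ 2 ≤ (u p.1 - u p.2) ^ 2 := by
          have := abs_abs_sub_abs_le_abs_sub (u p.1) (u p.2)
          have h2 : |(|u p.1| - |u p.2|)| ^ 2 ≤ |u p.1 - u p.2| ^ 2 :=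
            pow_le_pow_left₀ (abs_nonneg _) this 2
          rwa [sq_abs, sq_abs] at h2
        rw [Real.norm_eq_abs, abs_of_nonneg (mul_nonneg (sq_nonneg _) hK.le)]
        exact mul_le_mul_of_nonneg_right h1 hK.le

/-- `u ∈ X₀` is square integrable on the bounded set `Ω`. -/
lemma aux_l2 {s : ℝ} (hs0 : 0 < s) (hn : 2 * s < (n : ℝ))
    {Ω : Set (EV n)} (hΩm : MeasurableSet Ω) (hΩb : Bornology.IsBounded Ω)
    {K : EV n → ℝ}
    (hK2 : ∃ k₀ > 0, ∀ x : EV n, x ≠ 0 → k₀ * ‖x‖ ^ (-((n : ℝ) + 2 * s)) ≤ K x)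
    {u : EV n → ℝ} (hu : MemX0 K Ω u) :
    Integrable (fun x => u x ^ 2) (volume.restrict Ω) := by
  obtain ⟨k₀, hk₀, hK2⟩ := hK2
  obtain ⟨R, hR, hΩR⟩ := hΩb.subset_ball_lt 0 0
  have hn1 : n ≠ 0 := by
    rintro rfl
    simp only [Nat.cast_zero] at hn
    linarith
  set z : EV n := (2 * R) • EuclideanSpace.single ⟨0, Nat.pos_of_ne_zero hn1⟩ (1 : ℝ) with hzdef
  have hz : ‖z‖ = 2 * R := by
    rw [hzdef, norm_smul, EuclideanSpace.norm_single]
    simp [abs_of_pos, hR, abs_of_nonneg (by linarith : (0:ℝ) ≤ 2 * R)]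
  set A := Metric.closedBall z (R / 2) with hAdef
  have hA_meas : MeasurableSet A := measurableSet_closedBall
  have hAnorm : ∀ y ∈ A, 3 * R / 2 ≤ ‖y‖ := by
    intro y hy
    have hd : ‖y - z‖ ≤ R / 2 := by
      rw [← dist_eq_norm]; exact Metric.mem_closedBall.mp hy
    have := norm_sub_norm_le z y
    rw [← neg_sub y z, norm_neg] at this
    linarith [hz ▸ this]
  have hAΩ : ∀ y ∈ A, y ∉ Ω := by
    intro y hy hyΩ
    have h1 := hAnorm y hy
    have h2 : ‖y‖ < R := by
      have := hΩR hyΩ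
      rwa [Metric.mem_ball, dist_zero_right] at this
    linarith
  set c₁ := k₀ * (4 * R) ^ (-((n : ℝ) + 2 * s)) with hc₁def
  have hc₁ : 0 < c₁ :=
    mul_pos hk₀ (Real.rpow_pos_of_pos (by linarith) _)
  have hKlow : ∀ x ∈ Ω, ∀ y ∈ A, c₁ ≤ K (x - y) := by
    intro x hx y hy
    have hne : x - y ≠ 0 := by
      refine sub_ne_zero.mpr fun h => hAΩ y hy (h ▸ hx)
    have hxlt : ‖x‖ < R := by
      have := hΩR hx; rwa [Metric.mem_ball, dist_zero_right] at this
    have hyle : ‖y‖ ≤ 2 * R + R / 2 := by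
      have hd : ‖y - z‖ ≤ R / 2 := by
        rw [← dist_eq_norm]; exact Metric.mem_closedBall.mp hy
      have hyz : z + (y - z) = y := by abel
      calc ‖y‖ = ‖z + (y - z)‖ := by rw [hyz]
        _ ≤ ‖z‖ + ‖y - z‖ := norm_add_le _ _
        _ ≤ 2 * R + R / 2 := by rw [hz]; linarith
    have h4 : ‖x - y‖ ≤ 4 * R := by
      calc ‖x - y‖ ≤ ‖x‖ + ‖y‖ := norm_sub_le _ _
        _ ≤ 4 * R := by linarith
    have hrp : (4 * R) ^ (-((n : ℝ) + 2 * s)) ≤ ‖x - y‖ ^ (-((n : ℝ) + 2 * s)) := by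
      refine Real.rpow_le_rpow_of_nonpos (norm_pos_iff.mpr hne) h4 ?_
      have : (0:ℝ) ≤ n := Nat.cast_nonneg n
      linarith
    calc c₁ ≤ k₀ * ‖x - y‖ ^ (-((n : ℝ) + 2 * s)) := by
          exact mul_le_mul_of_nonneg_left hrp hk₀.le
      _ ≤ K (x - y) := hK2 _ hne
  set μΩ := volume.restrict Ω with hμΩdef
  set ν := volume.restrict A with hνdef
  have hνuniv : 0 < ν Set.univ := by
    rw [hνdef, Measure.restrict_apply_univ]
    exact lt_of_lt_of_le (Metric.measure_ball_pos volume z (by linarith))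
      (measure_mono Metric.ball_subset_closedBall)
  have hν0 : ν ≠ 0 := by
    intro h; rw [h] at hνuniv; simp at hνuniv
  have hprod : Integrable (fun p : EV n × EV n => c₁ * u p.1 ^ 2) (μΩ.prod ν) := by
    have hFi : Integrable
        (fun p : EV n × EV n => (u p.1 - u p.2) ^ 2 * K (p.1 - p.2)) (μΩ.prod ν) := by
      rw [hμΩdef, hνdef, Measure.prod_restrict]
      have h := hu.fin.restrict (s := Ω ×ˢ A)
      rwa [Measure.volume_eq_prod] at h
    refine Integrable.mono' hFi ?_ ?_
    · exact (((hu.meas.comp measurable_fst).pow_const 2).const_mul c₁).aestronglyMeasurable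
    · have h1 : ∀ᵐ x ∂μΩ, x ∈ Ω := ae_restrict_mem hΩm
      have h2 : ∀ᵐ y ∂ν, u y = 0 ∧ y ∈ A := by
        filter_upwards [ae_restrict_of_ae hu.zero, ae_restrict_mem hA_meas] with y hy hyA
        exact ⟨hy (hAΩ y hyA), hyA⟩
      filter_upwards [aux_prod_ae h1 h2] with p hp
      obtain ⟨hp1, hp2, hp2A⟩ := hp
      have hKl := hKlow p.1 hp1 p.2 hp2A
      rw [Real.norm_eq_abs, abs_of_nonneg (by positivity), hp2, sub_zero]
      nlinarith [sq_nonneg (u p.1)]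
  have hae := hprod.prod_left_ae
  haveI : (ae ν).NeBot := ae_neBot.mpr hν0
  obtain ⟨y, hy⟩ := hae.exists
  have h2 := hy.const_mul c₁⁻¹
  simp only [← mul_assoc, inv_mul_cancel₀ hc₁.ne', one_mul] at h2
  exact h2

/-- `(u⁺)^r` is integrable on `Ω`. -/
lemma aux_int_r {r : ℝ} (hr0 : 0 < r) (hr1 : r ≤ 1)
    {Ω : Set (EV n)} (hΩvol : volume Ω < ⊤) {v : EV n → ℝ} (hm : Measurable v)
    (hv2 : Integrable (fun x => v x ^ 2) (volume.restrict Ω)) :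
    Integrable (fun x => (max (v x) 0) ^ r) (volume.restrict Ω) := by
  haveI : IsFiniteMeasure (volume.restrict Ω) :=
    ⟨by rwa [Measure.restrict_apply_univ]⟩
  refine Integrable.mono' (hv2.add (integrable_const 1)) ?_ ?_
  · exact ((Real.continuous_rpow_const hr0.le).measurable.comp
      (hm.max measurable_const)).aestronglyMeasurable
  · refine Filter.Eventually.of_forall fun x => ?_
    set m := max (v x) 0 with hmdef
    have hm0 : 0 ≤ m := le_max_right _ _
    simp only [Pi.add_apply]
    rw [Real.norm_eq_abs, abs_of_nonneg (Real.rpow_nonneg hm0 r)]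
    rcases le_or_gt m 1 with h | h
    · have := Real.rpow_le_one hm0 h hr0.le
      nlinarith [sq_nonneg (v x)]
    · have h1 : m ^ r ≤ m ^ (1:ℝ) :=
        Real.rpow_le_rpow_of_exponent_le h.le hr1
      rw [Real.rpow_one] at h1
      have hv0 : 0 ≤ v x := by
        by_contra hneg
        push_neg at hneg
        rw [hmdef, max_eq_right hneg.le] at h
        exact absurd h (by norm_num)
      have hmv : m = v x := by rw [hmdef, max_eq_left hv0]
      nlinarith
  
/-- Value of the singular energy at `0`. -/
lemma aux_energySing_zero {s : ℝ} {K : EV n → ℝ} {Ω : Set (EV n)} {μ lam r : ℝ}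
    {g : ℝ → ℝ} (h2 : twoStar n s ≠ 0) (hrne : r ≠ 0) :
    energySing s K Ω μ lam r g (fun _ => 0) = 0 := by
  unfold energySing gNorm gInner
  simp [Real.zero_rpow h2, Real.zero_rpow hrne]

/-- Key lemma: negativity of the energy along small multiples of `v`. -/
lemma aux_key {s : ℝ} {K : EV n → ℝ} {Ω : Set (EV n)} (hΩm : MeasurableSet Ω)
    (hKpos : ∀ x : EV n, x ≠ 0 → 0 < K x)
    {μ lam r : ℝ} (hlam : 0 < lam) (hμ : 0 < μ) (hr : r ∈ Set.Ioo (0:ℝ) 1)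
    (h2star : 0 < twoStar n s)
    {g : ℝ → ℝ} (hgpos : ∀ t : ℝ, 0 ≤ t → 0 ≤ g t)
    {v : EV n → ℝ} (hI : 0 < ∫ x in Ω, (max (v x) 0) ^ r) :
    ∃ t₀ > (0:ℝ), ∀ t : ℝ, t ∈ Set.Ioo 0 t₀ →
      energySing s K Ω μ lam r g (fun x => t * v x) < 0 := by
  set G0 := gInner K v v with hG0def
  have hG0 : 0 ≤ G0 := aux_gInner_nonneg hKpos v
  set I := ∫ x in Ω, (max (v x) 0) ^ r with hIdef
  set C := lam / r * I with hCdef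
  have hC : 0 < C := mul_pos (div_pos hlam hr.1) hI
  refine ⟨min 1 (C / (G0 + 1)), lt_min one_pos (div_pos hC (by linarith)), ?_⟩
  rintro t ⟨ht0, htlt⟩
  have ht1 : t < 1 := lt_of_lt_of_le htlt (min_le_left _ _)
  have ht2 : t < C / (G0 + 1) := lt_of_lt_of_le htlt (min_le_right _ _)
  have htG : t * G0 < C := by
    rw [lt_div_iff₀ (by linarith : (0:ℝ) < G0 + 1)] at ht2
    nlinarith
  have htr : t ≤ t ^ r := by
    calc t = t ^ (1:ℝ) := (Real.rpow_one t).symm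
      _ ≤ t ^ r := Real.rpow_le_rpow_of_exponent_ge ht0 ht1.le hr.2.le
  have htrpos : 0 < t ^ r := Real.rpow_pos_of_pos ht0 r
  have hnorm : gNorm K (fun x => t * v x) ^ 2 = t ^ 2 * G0 := by
    unfold gNorm
    rw [aux_gInner_smul]
    exact Real.sq_sqrt (by positivity)
  have h2 : 0 ≤ ∫ x in Ω, (max (t * v x) 0) ^ twoStar n s :=
    setIntegral_nonneg hΩm fun x _ => Real.rpow_nonneg (le_max_right _ _) _
  have h3 : (∫ x in Ω, (max (t * v x) 0) ^ r) = t ^ r * I := by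
    rw [hIdef, ← integral_const_mul]
    refine integral_congr_ae (Filter.Eventually.of_forall fun x => ?_)
    show max (t * v x) 0 ^ r = t ^ r * max (v x) 0 ^ r
    rw [show max (t * v x) 0 = t * max (v x) 0 by
        rw [mul_max_of_nonneg _ _ ht0.le, mul_zero],
      Real.mul_rpow ht0.le (le_max_right _ _)]
  have h4 : 0 ≤ ∫ x in Ω, (∫ τ in (0:ℝ)..(max (t * v x) 0), g τ) :=
    setIntegral_nonneg hΩm fun x _ =>
      intervalIntegral.integral_nonneg (le_max_right _ _) (fun τ hτ => hgpos τ hτ.1)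
  have hkey : 1 / 2 * (t ^ 2 * G0) < t ^ r * C := by
    have e1 : t ^ 2 * G0 ≤ t ^ r * (t * G0) := by
      have := mul_le_mul_of_nonneg_right htr (mul_nonneg ht0.le hG0)
      nlinarith
    have e2 : t ^ r * (t * G0) < t ^ r * C := by
      exact mul_lt_mul_of_pos_left htG htrpos
    nlinarith
  have hE : energySing s K Ω μ lam r g (fun x => t * v x)
      = 1 / 2 * (t ^ 2 * G0)
        - μ / twoStar n s * (∫ x in Ω, (max (t * v x) 0) ^ twoStar n s)
        - lam / r * (t ^ r * I)
        - lam * ∫ x in Ω, (∫ τ in (0:ℝ)..(max (t * v x) 0), g τ) := by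
    unfold energySing
    rw [hnorm, h3]
  rw [hE]
  have hμ2 : 0 ≤ μ / twoStar n s := le_of_lt (div_pos hμ h2star)
  have hterm3 : lam / r * (t ^ r * I) = t ^ r * C := by rw [hCdef]; ring
  nlinarith [mul_nonneg hμ2 h2, mul_nonneg hlam.le h4]

end AuxiliaryLemmas

/-- **Non-triviality of the minimizer for the singular problem** (final step in
the proof of Theorem 3.5): for every `u ∈ X₀` with `u > 0` a.e. in `Ω`, the
singular energy satisfies `E_{λ,μ}(t u) < 0` for all small `t > 0`; in
particular `0` is not a local minimizer. -/
theorem statement13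
    (n : ℕ) (s : ℝ) (hs : s ∈ Set.Ioo (0:ℝ) 1) (hn : 2 * s < n)
    (Ω : Set (EV n)) (hΩo : IsOpen Ω) (hΩne : Ω.Nonempty) (hΩb : Bornology.IsBounded Ω)
    (K : EV n → ℝ)
    (hKpos : ∀ x : EV n, x ≠ 0 → 0 < K x)
    (hK1 : Integrable (fun x : EV n => min (‖x‖ ^ 2) 1 * K x))
    (hK2 : ∃ k₀ > 0, ∀ x : EV n, x ≠ 0 → k₀ * ‖x‖ ^ (-((n : ℝ) + 2 * s)) ≤ K x)
    (c : ℝ) (hc : 0 < c)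
    (hclub : IsLUB {ρ : ℝ | ∃ u, MemX0 K Ω u ∧
        ¬ (∀ᵐ x ∂(volume : Measure (EV n)), u x = 0) ∧
        ρ = lpNorm Ω (twoStar n s) u / gNorm K u} c)
    (lam μ : ℝ) (hlam : 0 < lam) (hμ : 0 < μ)
    (r : ℝ) (hr : r ∈ Set.Ioo (0:ℝ) 1)
    -- `g : [0,∞) → [0,∞)` continuous satisfying (g1'):
    (g : ℝ → ℝ) (hgc : ContinuousOn g (Set.Ici 0)) (hgpos : ∀ t : ℝ, 0 ≤ t → 0 ≤ g t)
    (a₁ a₂ q : ℝ) (ha₁ : 0 ≤ a₁) (ha₂ : 0 ≤ a₂) (hq₁ : 1 ≤ q) (hq₂ : q < twoStar n s)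
    (hg1 : ∀ t : ℝ, 0 ≤ t → g t ≤ a₁ + a₂ * t ^ (q - 1)) :
    (∀ u : EV n → ℝ, MemX0 K Ω u →
      (∀ᵐ x ∂(volume : Measure (EV n)), x ∈ Ω → 0 < u x) →
      ∃ t₀ > (0:ℝ), ∀ t : ℝ, t ∈ Set.Ioo 0 t₀ →
        energySing s K Ω μ lam r g (fun x => t * u x) < 0) ∧
    (∀ ε > (0:ℝ), ∃ w : EV n → ℝ, MemX0 K Ω w ∧ gNorm K w < ε ∧
      energySing s K Ω μ lam r g w < energySing s K Ω μ lam r g (fun _ => 0)) := by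
  have hΩm : MeasurableSet Ω := hΩo.measurableSet
  have hs0 : 0 < s := hs.1
  have hn1 : n ≠ 0 := by
    rintro rfl
    simp only [Nat.cast_zero] at hn
    linarith
  have h2star : 0 < twoStar n s := by
    have := lt_of_le_of_lt hq₁ hq₂
    linarith
  have hΩvol : volume Ω < ⊤ := hΩb.measure_lt_top
  constructor
  · intro u hu hupos
    have hu2 := aux_l2 hs0 hn hΩm hΩb hK2 hu
    have hint := aux_int_r hr.1 hr.2.le hΩvol hu.meas hu2
    have hnonneg : 0 ≤ᵐ[volume.restrict Ω] fun x => (max (u x) 0) ^ r :=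
      Filter.Eventually.of_forall fun x => Real.rpow_nonneg (le_max_right _ _) _
    have hposae : ∀ᵐ x ∂(volume.restrict Ω), 0 < (max (u x) 0) ^ r := by
      filter_upwards [ae_restrict_of_ae hupos, ae_restrict_mem hΩm] with x hx hxΩ
      exact Real.rpow_pos_of_pos (lt_of_lt_of_le (hx hxΩ) (le_max_left _ _)) r
    have hI : 0 < ∫ x in Ω, (max (u x) 0) ^ r := by
      rw [integral_pos_iff_support_of_nonneg_ae hnonneg hint]
      have hcompl : (volume.restrict Ω) (Function.support fun x => (max (u x) 0) ^ r)ᶜ = 0 := by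
        refine measure_mono_null ?_ (ae_iff.mp hposae)
        intro x hx
        simp only [Set.mem_compl_iff, Function.mem_support, not_not] at hx
        simp [hx]
      have huniv : 0 < (volume.restrict Ω) Set.univ := by
        rw [Measure.restrict_apply_univ]
        exact hΩo.measure_pos volume hΩne
      have hle : (volume.restrict Ω) Set.univ
          ≤ (volume.restrict Ω) (Function.support fun x => (max (u x) 0) ^ r) := by
        calc (volume.restrict Ω) Set.univ
            = (volume.restrict Ω) ((Function.support fun x => (max (u x) 0) ^ r)
              ∪ (Function.support fun x => (max (u x) 0) ^ r)ᶜ) := by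
              rw [Set.union_compl_self]
          _ ≤ (volume.restrict Ω) (Function.support fun x => (max (u x) 0) ^ r)
              + (volume.restrict Ω) (Function.support fun x => (max (u x) 0) ^ r)ᶜ :=
              measure_union_le _ _
          _ = (volume.restrict Ω) (Function.support fun x => (max (u x) 0) ^ r) := by
              rw [hcompl, add_zero]
      exact lt_of_lt_of_le huniv hle
    exact aux_key hΩm hKpos hlam hμ hr h2star hgpos hI
  · intro ε hε
    have hSne : {ρ : ℝ | ∃ u, MemX0 K Ω u ∧
        ¬ (∀ᵐ x ∂(volume : Measure (EV n)), u x = 0) ∧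
        ρ = lpNorm Ω (twoStar n s) u / gNorm K u}.Nonempty := by
      by_contra h
      have h1 : (c - 1) ∈ upperBounds {ρ : ℝ | ∃ u, MemX0 K Ω u ∧
          ¬ (∀ᵐ x ∂(volume : Measure (EV n)), u x = 0) ∧
          ρ = lpNorm Ω (twoStar n s) u / gNorm K u} := fun x hx => (h ⟨x, hx⟩).elim
      have := hclub.2 h1
      linarith
    obtain ⟨ρ, u₀, hu₀X, hu₀ne, -⟩ := hSne
    set v := fun x => |u₀ x| with hvdef
    have hvX : MemX0 K Ω v := aux_memX0_abs hn1 hK1 hKpos hu₀X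
    have hv2 := aux_l2 hs0 hn hΩm hΩb hK2 hvX
    have hint := aux_int_r hr.1 hr.2.le hΩvol hvX.meas hv2
    have hnonneg : 0 ≤ᵐ[volume.restrict Ω] fun x => (max (v x) 0) ^ r :=
      Filter.Eventually.of_forall fun x => Real.rpow_nonneg (le_max_right _ _) _
    have hTmeas : MeasurableSet {x : EV n | u₀ x ≠ 0} :=
      (hu₀X.meas (measurableSet_singleton (0:ℝ))).compl
    have hI : 0 < ∫ x in Ω, (max (v x) 0) ^ r := by
      rw [integral_pos_iff_support_of_nonneg_ae hnonneg hint]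
      have hsub : {x : EV n | u₀ x ≠ 0} ∩ Ω ⊆
          Function.support fun x => (max (v x) 0) ^ r := by
        intro x hx
        have hpos : 0 < max (v x) 0 :=
          lt_of_lt_of_le (abs_pos.mpr hx.1) (le_max_left _ _)
        exact (Real.rpow_pos_of_pos hpos r).ne'
      have hT : 0 < volume {x : EV n | u₀ x ≠ 0} := by
        rw [pos_iff_ne_zero]
        intro h0
        exact hu₀ne (ae_iff.mpr h0)
      have hdiff : volume ({x : EV n | u₀ x ≠ 0} \ Ω) = 0 := by
        refine measure_mono_null ?_ (ae_iff.mp hu₀X.zero)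
        intro x hx
        simp only [Set.mem_setOf_eq]
        intro hcontra
        exact hx.1 (hcontra hx.2)
      have hTsplit : volume {x : EV n | u₀ x ≠ 0}
          ≤ volume ({x : EV n | u₀ x ≠ 0} ∩ Ω) + volume ({x : EV n | u₀ x ≠ 0} \ Ω) := by
        have hle := measure_union_le (μ := (volume : Measure (EV n)))
          ({x : EV n | u₀ x ≠ 0} ∩ Ω) ({x : EV n | u₀ x ≠ 0} \ Ω)
        rwa [Set.inter_union_diff] at hle
      have hTΩ : 0 < volume ({x : EV n | u₀ x ≠ 0} ∩ Ω) := by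
        rw [hdiff, add_zero] at hTsplit
        exact lt_of_lt_of_le hT hTsplit
      have h1 : 0 < (volume.restrict Ω) ({x : EV n | u₀ x ≠ 0} ∩ Ω) := by
        rw [Measure.restrict_apply (hTmeas.inter hΩm), Set.inter_assoc, Set.inter_self]
        exact hTΩ
      exact lt_of_lt_of_le h1 (measure_mono hsub)
    obtain ⟨t₀, ht₀, hkey⟩ := aux_key hΩm hKpos hlam hμ hr h2star hgpos hI
    set N := gNorm K v with hNdef
    have hN : 0 ≤ N := Real.sqrt_nonneg _
    set t := min (t₀ / 2) (ε / (2 * (N + 1))) with htdef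
    have ht0 : 0 < t := lt_min (by linarith) (by positivity)
    have htIoo : t ∈ Set.Ioo 0 t₀ :=
      ⟨ht0, lt_of_le_of_lt (min_le_left _ _) (by linarith)⟩
    refine ⟨fun x => t * v x, aux_memX0_smul hvX t, ?_, ?_⟩
    · rw [aux_gNorm_smul ht0.le]
      have h1 : t ≤ ε / (2 * (N + 1)) := min_le_right _ _
      have h2 : t * N ≤ (ε / (2 * (N + 1))) * (N + 1) :=
        mul_le_mul h1 (by linarith) hN (by positivity)
      have heq : (ε / (2 * (N + 1))) * (N + 1) = ε / 2 := by
        field_simp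
      rw [heq] at h2
      calc t * N ≤ ε / 2 := h2
        _ < ε := by linarith
    · rw [aux_energySing_zero h2star.ne' hr.1.ne']
      exact hkey t htIoo
end
end
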